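/- arXiv:1501.05485 — 3 statements merged into one kernel-verified Lean document; each statement's English description precedes it below -/
import Mathlib

section
/- For every integer t with 0 ≤ t and t+1 ≤ n(1−a), the variance of Y_{t+1} satisfies Var(Y_{t+1}) ≤ (a/n²)·Σ_{j=t}^{2t} (1+1/n)^j − (a²/n²)·t·(1+1/n)^{2t}. -/
/-!
The Markov chain `(Y_t)` with `Y_0 = a = j/n ∈ Q_n = {1/n, …, 1}` and, conditionally on
the past, `Y_{t+1} = Y_t + 1/n` with probability `Y_t` and `Y_{t+1} = Y_t` with probability
`1 - Y_t`.  Since `Y_t ∈ {a + k/n : 0 ≤ k ≤ t}`, its law is described by the probabilities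
`ccrYProb n j t k = P(Y_t = (j+k)/n)`, given by the evident recursion.
-/

/-- `ccrYProb n j t k` is the probability that `Y_t = (j + k)/n`, where `Y_0 = j/n`. -/
noncomputable def ccrYProb (n j : ℕ) : ℕ → ℕ → ℝ
  | 0, k => if k = 0 then 1 else 0
  | t + 1, k =>
      ccrYProb n j t k * (1 - ((j : ℝ) + k) / n) +
        (if k = 0 then 0 else ccrYProb n j t (k - 1) * (((j : ℝ) + (k - 1 : ℕ)) / n))

/-- The expectation `E[Y_t]`. -/
noncomputable def ccrYExp (n j t : ℕ) : ℝ :=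
  ∑ k ∈ Finset.range (t + 1), (((j : ℝ) + k) / n) * ccrYProb n j t k

/-- The variance `Var(Y_t)`. -/
noncomputable def ccrYVar (n j t : ℕ) : ℝ :=
  (∑ k ∈ Finset.range (t + 1), (((j : ℝ) + k) / n) ^ 2 * ccrYProb n j t k) - (ccrYExp n j t) ^ 2

/-! ### Auxiliary lemmas -/

/-- Second moment `E[Y_t²]`. -/
noncomputable def ccrS2 (n j t : ℕ) : ℝ :=
  ∑ k ∈ Finset.range (t + 1), (((j : ℝ) + k) / n) ^ 2 * ccrYProb n j t k

/-- Total mass. -/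
noncomputable def ccrMass (n j t : ℕ) : ℝ :=
  ∑ k ∈ Finset.range (t + 1), ccrYProb n j t k

lemma ccr_prob_support (n j : ℕ) : ∀ t k : ℕ, t < k → ccrYProb n j t k = 0 := by
  intro t
  induction t with
  | zero => intro k hk; simp only [ccrYProb]; rw [if_neg (by omega)]
  | succ t ih =>
    intro k hk
    simp only [ccrYProb]
    rw [if_neg (by omega), ih k (by omega), ih (k-1) (by omega)]
    ring

lemma ccr_step (n j : ℕ) (f : ℝ → ℝ) (t : ℕ) :
    ∑ k ∈ Finset.range (t + 2), f (((j:ℝ)+k)/n) * ccrYProb n j (t+1) k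
      = ∑ k ∈ Finset.range (t + 1), ccrYProb n j t k *
          (f (((j:ℝ)+k)/n) * (1 - ((j:ℝ)+k)/n) + f (((j:ℝ)+(k+1:ℕ))/n) * (((j:ℝ)+k)/n)) := by
  have hA : ∑ k ∈ Finset.range (t + 2), f (((j:ℝ)+k)/n) * (ccrYProb n j t k * (1 - ((j:ℝ)+k)/n))
      = ∑ k ∈ Finset.range (t + 1), f (((j:ℝ)+k)/n) * (ccrYProb n j t k * (1 - ((j:ℝ)+k)/n)) := by
    rw [Finset.sum_range_succ, ccr_prob_support n j t (t+1) (by omega)]; ring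
  have hB : (∑ k ∈ Finset.range (t + 2), f (((j:ℝ)+k)/n) *
        (if k = 0 then 0 else ccrYProb n j t (k-1) * (((j:ℝ)+((k-1:ℕ):ℝ))/n)))
      = ∑ k ∈ Finset.range (t + 1), f (((j:ℝ)+(k+1:ℕ))/n) * (ccrYProb n j t k * (((j:ℝ)+k)/n)) := by
    rw [Finset.sum_range_succ']
    simp
  calc ∑ k ∈ Finset.range (t + 2), f (((j:ℝ)+k)/n) * ccrYProb n j (t+1) k
      = (∑ k ∈ Finset.range (t + 2), f (((j:ℝ)+k)/n) * (ccrYProb n j t k * (1 - ((j:ℝ)+k)/n)))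
        + ∑ k ∈ Finset.range (t + 2), f (((j:ℝ)+k)/n) *
            (if k = 0 then 0 else ccrYProb n j t (k-1) * (((j:ℝ)+((k-1:ℕ):ℝ))/n)) := by
        rw [← Finset.sum_add_distrib]
        exact Finset.sum_congr rfl fun k _ => by simp only [ccrYProb]; ring
    _ = (∑ k ∈ Finset.range (t + 1), f (((j:ℝ)+k)/n) * (ccrYProb n j t k * (1 - ((j:ℝ)+k)/n)))
        + ∑ k ∈ Finset.range (t + 1), f (((j:ℝ)+(k+1:ℕ))/n) * (ccrYProb n j t k * (((j:ℝ)+k)/n)) := by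
        rw [hA, hB]
    _ = _ := by rw [← Finset.sum_add_distrib]; exact Finset.sum_congr rfl fun k _ => by ring

lemma ccr_mass (n j : ℕ) (t : ℕ) : ccrMass n j t = 1 := by
  induction t with
  | zero => simp [ccrMass, ccrYProb]
  | succ t ih =>
    calc ccrMass n j (t+1) = ∑ k ∈ Finset.range (t + 2),
          (fun _ : ℝ => (1:ℝ)) (((j:ℝ)+k)/n) * ccrYProb n j (t+1) k := by
          unfold ccrMass; exact Finset.sum_congr rfl fun k _ => by ring
      _ = ∑ k ∈ Finset.range (t + 1), ccrYProb n j t k := by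
          rw [ccr_step n j (fun _ => 1) t]
          exact Finset.sum_congr rfl fun k _ => by ring
      _ = 1 := ih

lemma ccr_exp (n j : ℕ) (hn : 1 ≤ n) (t : ℕ) :
    ccrYExp n j t = ((j:ℝ)/n) * (1 + 1/(n:ℝ))^t := by
  have hn0 : (n:ℝ) ≠ 0 := by positivity
  induction t with
  | zero => simp [ccrYExp, ccrYProb]
  | succ t ih =>
    calc ccrYExp n j (t+1) = ∑ k ∈ Finset.range (t + 2),
          (fun x : ℝ => x) (((j:ℝ)+k)/n) * ccrYProb n j (t+1) k := rfl
      _ = ∑ k ∈ Finset.range (t + 1), (1 + 1/(n:ℝ)) * ((((j:ℝ)+k)/n) * ccrYProb n j t k) := by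
          rw [ccr_step n j (fun x => x) t]
          refine Finset.sum_congr rfl fun k _ => ?_
          push_cast
          field_simp
          ring
      _ = (1 + 1/(n:ℝ)) * ccrYExp n j t := by rw [← Finset.mul_sum]; rfl
      _ = ((j:ℝ)/n) * (1 + 1/(n:ℝ))^(t+1) := by rw [ih]; ring

lemma ccr_s2 (n j : ℕ) (hn : 1 ≤ n) (t : ℕ) :
    ccrS2 n j (t+1) = (1 + 2/(n:ℝ)) * ccrS2 n j t + ccrYExp n j t / (n:ℝ)^2 := by
  have hn0 : (n:ℝ) ≠ 0 := by positivity
  calc ccrS2 n j (t+1) = ∑ k ∈ Finset.range (t + 2),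
        (fun x : ℝ => x^2) (((j:ℝ)+k)/n) * ccrYProb n j (t+1) k := rfl
    _ = ∑ k ∈ Finset.range (t + 1), ((1 + 2/(n:ℝ)) * ((((j:ℝ)+k)/n)^2 * ccrYProb n j t k)
          + ((((j:ℝ)+k)/n) * ccrYProb n j t k) / (n:ℝ)^2) := by
        rw [ccr_step n j (fun x => x^2) t]
        refine Finset.sum_congr rfl fun k _ => ?_
        push_cast
        field_simp
        ring
    _ = (1 + 2/(n:ℝ)) * ccrS2 n j t + ccrYExp n j t / (n:ℝ)^2 := by
        rw [Finset.sum_add_distrib, ← Finset.mul_sum, ← Finset.sum_div]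
        rfl

lemma ccr_prob_nonneg (n j : ℕ) (hn : 1 ≤ n) :
    ∀ t, j + t ≤ n + 1 → ∀ k, 0 ≤ ccrYProb n j t k := by
  intro t
  induction t with
  | zero => intro _ k; simp only [ccrYProb]; split <;> norm_num
  | succ t ih =>
    intro ht k
    have ihk := ih (by omega)
    simp only [ccrYProb]
    have h1 : 0 ≤ ccrYProb n j t k * (1 - ((j:ℝ) + k) / n) := by
      rcases le_or_gt k t with hk | hk
      · apply mul_nonneg (ihk k)
        have hjk : (j:ℝ) + k ≤ n := by
          have : j + k ≤ n := by omega
          exact_mod_cast this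
        have hn0 : (0:ℝ) < n := by positivity
        rw [sub_nonneg, div_le_one hn0]
        exact hjk
      · rw [ccr_prob_support n j t k hk]; simp
    have h2 : 0 ≤ (if k = 0 then 0 else ccrYProb n j t (k - 1) * (((j:ℝ) + (k - 1 : ℕ)) / n)) := by
      split
      · exact le_refl 0
      · exact mul_nonneg (ihk _) (by positivity)
    linarith

lemma ccr_var_eq (n j t : ℕ) :
    ccrS2 n j t - (ccrYExp n j t)^2
      = ∑ k ∈ Finset.range (t+1), ccrYProb n j t k * (((j:ℝ)+k)/n - ccrYExp n j t)^2 := by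
  have hm := ccr_mass n j t
  have expand : ∀ k : ℕ, ccrYProb n j t k * (((j:ℝ)+k)/n - ccrYExp n j t)^2
      = (((j:ℝ)+k)/n)^2 * ccrYProb n j t k
        - 2 * ccrYExp n j t * ((((j:ℝ)+k)/n) * ccrYProb n j t k)
        + (ccrYExp n j t)^2 * ccrYProb n j t k := fun k => by ring
  rw [Finset.sum_congr rfl fun k _ => expand k]
  rw [Finset.sum_add_distrib, Finset.sum_sub_distrib, ← Finset.mul_sum, ← Finset.mul_sum]
  have h1 : ∑ k ∈ Finset.range (t+1), (((j:ℝ)+k)/n) * ccrYProb n j t k = ccrYExp n j t := rfl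
  have h2 : ∑ k ∈ Finset.range (t+1), ccrYProb n j t k = 1 := hm
  have h3 : ∑ k ∈ Finset.range (t+1), (((j:ℝ)+k)/n)^2 * ccrYProb n j t k = ccrS2 n j t := rfl
  rw [h1, h2, h3]
  ring

lemma ccr_var_nonneg (n j : ℕ) (hn : 1 ≤ n) (t : ℕ) (ht : j + t ≤ n + 1) :
    0 ≤ ccrYVar n j t := by
  show 0 ≤ ccrS2 n j t - (ccrYExp n j t)^2
  rw [ccr_var_eq]
  apply Finset.sum_nonneg
  intro k _
  exact mul_nonneg (ccr_prob_nonneg n j hn t ht k) (sq_nonneg _)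

lemma ccr_sum_shift (q : ℝ) (t : ℕ) :
    ∑ i ∈ Finset.Icc (t+1) (2*(t+1)), q^i
      = q^2 * ∑ i ∈ Finset.Icc t (2*t), q^i + q^(t+1) := by
  rw [← Finset.Ico_add_one_right_eq_Icc (t+1) _, ← Finset.Ico_add_one_right_eq_Icc t _,
    Finset.sum_Ico_eq_sum_range, Finset.sum_Ico_eq_sum_range]
  have e1 : 2*(t+1) + 1 - (t+1) = t + 2 := by omega
  have e2 : 2*t + 1 - t = t + 1 := by omega
  rw [e1, e2]
  have p1 : ∀ i, q^(t+1+i) = q^(t+1) * q^i := fun i => pow_add q (t+1) i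
  have p2 : ∀ i, q^(t+i) = q^t * q^i := fun i => pow_add q t i
  rw [Finset.sum_congr rfl fun i _ => p1 i, Finset.sum_congr rfl fun i _ => p2 i,
    ← Finset.mul_sum, ← Finset.mul_sum, geom_sum_succ (x := q) (n := t+1)]
  have : q^(t+1) = q^t * q := pow_succ q t
  rw [this]
  ring

/-- For every integer `t ≥ 0` with `t + 1 ≤ n(1-a)`, where `a = j/n`,
`Var(Y_{t+1}) ≤ (a/n²)·Σ_{i=t}^{2t} (1+1/n)^i − (a²/n²)·t·(1+1/n)^{2t}`. -/
theorem ccrY_variance_bound (n j : ℕ) (hn : 1 ≤ n) (hj1 : 1 ≤ j) (hjn : j ≤ n)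
    (t : ℕ) (ht : t + 1 ≤ n - j) :
    ccrYVar n j (t + 1) ≤
      ((j : ℝ) / n) / (n : ℝ) ^ 2 * ∑ i ∈ Finset.Icc t (2 * t), (1 + 1 / (n : ℝ)) ^ i -
        ((j : ℝ) / n) ^ 2 / (n : ℝ) ^ 2 * t * (1 + 1 / (n : ℝ)) ^ (2 * t) := by
  have hn0 : (n:ℝ) ≠ 0 := by positivity
  have hjt : j + t + 1 ≤ n := by omega
  clear ht
  induction t with
  | zero =>
    have hvar : ccrYVar n j 1 = ccrS2 n j 1 - (ccrYExp n j 1)^2 := rfl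
    have hs2 : ccrS2 n j 1 = (1 + 2/(n:ℝ)) * ccrS2 n j 0 + ccrYExp n j 0 / (n:ℝ)^2 :=
      ccr_s2 n j hn 0
    have hs20 : ccrS2 n j 0 = ((j:ℝ)/n)^2 := by simp [ccrS2, ccrYProb]
    have he0 : ccrYExp n j 0 = ((j:ℝ)/n) * (1 + 1/(n:ℝ))^0 := ccr_exp n j hn 0
    have he1 : ccrYExp n j 1 = ((j:ℝ)/n) * (1 + 1/(n:ℝ))^1 := ccr_exp n j hn 1
    simp only [Finset.Icc_self, Finset.sum_singleton]
    rw [hvar, hs2, hs20, he0, he1]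
    have hja : (0:ℝ) ≤ ((j:ℝ)/n)^2 / (n:ℝ)^2 := by positivity
    have : (1 + 2/(n:ℝ)) * ((j:ℝ)/n)^2 + ((j:ℝ)/n) * (1 + 1/(n:ℝ))^0 / (n:ℝ)^2
        - (((j:ℝ)/n) * (1 + 1/(n:ℝ))^1)^2
        = ((j:ℝ)/n)/(n:ℝ)^2 * (1 + 1/(n:ℝ))^0 - ((j:ℝ)/n)^2/(n:ℝ)^2 := by
      field_simp
      ring
    rw [this]
    push_cast
    nlinarith [hja]
  | succ t ih =>
    have hB := ih (by omega)
    have hvnn : 0 ≤ ccrYVar n j (t+1) := ccr_var_nonneg n j hn (t+1) (by omega)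
    have he1 : ccrYExp n j (t+1) = ((j:ℝ)/n) * (1 + 1/(n:ℝ))^(t+1) := ccr_exp n j hn (t+1)
    have he2 : ccrYExp n j (t+2) = ((j:ℝ)/n) * (1 + 1/(n:ℝ))^(t+2) := ccr_exp n j hn (t+2)
    set a : ℝ := (j:ℝ)/n with ha
    set q : ℝ := 1 + 1/(n:ℝ) with hq
    have key : ccrYVar n j (t+2) = (1 + 2/(n:ℝ)) * ccrYVar n j (t+1)
        + ((1 + 2/(n:ℝ)) * (a * q^(t+1))^2 + (a * q^(t+1))/(n:ℝ)^2 - (a * q^(t+2))^2) := by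
      have h1 : ccrYVar n j (t+2) = ccrS2 n j (t+2) - (ccrYExp n j (t+2))^2 := rfl
      have h2 : ccrS2 n j (t+1) = ccrYVar n j (t+1) + (ccrYExp n j (t+1))^2 := by
        have : ccrYVar n j (t+1) = ccrS2 n j (t+1) - (ccrYExp n j (t+1))^2 := rfl
        rw [this]; ring
      rw [h1, ccr_s2 n j hn (t+1), h2, he1, he2]
      ring
    have hq2 : (q:ℝ)^2 = 1 + 2/(n:ℝ) + (1/(n:ℝ))^2 := by rw [hq]; ring
    have step1 : ccrYVar n j (t+2) ≤ q^2 * ccrYVar n j (t+1)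
        + ((1 + 2/(n:ℝ)) * (a * q^(t+1))^2 + (a * q^(t+1))/(n:ℝ)^2 - (a * q^(t+2))^2) := by
      rw [key]
      have : (1 + 2/(n:ℝ)) * ccrYVar n j (t+1) ≤ q^2 * ccrYVar n j (t+1) := by
        apply mul_le_mul_of_nonneg_right _ hvnn
        rw [hq2]
        nlinarith [sq_nonneg (1/(n:ℝ))]
      linarith
    have step2 : q^2 * ccrYVar n j (t+1)
        + ((1 + 2/(n:ℝ)) * (a * q^(t+1))^2 + (a * q^(t+1))/(n:ℝ)^2 - (a * q^(t+2))^2)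
        ≤ q^2 * (a/(n:ℝ)^2 * ∑ i ∈ Finset.Icc t (2*t), q^i - a^2/(n:ℝ)^2 * t * q^(2*t))
          + ((1 + 2/(n:ℝ)) * (a * q^(t+1))^2 + (a * q^(t+1))/(n:ℝ)^2 - (a * q^(t+2))^2) := by
      have hq2nn : (0:ℝ) ≤ q^2 := sq_nonneg q
      have := mul_le_mul_of_nonneg_left hB hq2nn
      linarith
    refine le_trans (le_trans step1 step2) (le_of_eq ?_)
    rw [ccr_sum_shift q t]
    have e1 : q^(t+1) = q^t * q := pow_succ q t
    have e2 : q^(t+2) = q^t * q * q := by rw [pow_succ, pow_succ]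
    have e3 : q^(2*t) = q^t * q^t := by rw [two_mul, pow_add]
    have e4 : q^(2*(t+1)) = q^t * q^t * (q * q) := by
      have h24 : 2*(t+1) = 2*t + 2 := by ring
      rw [h24, pow_add, e3]; ring
    rw [e1, e2, e3, e4]
    set S : ℝ := ∑ i ∈ Finset.Icc t (2*t), q^i with hS
    push_cast
    generalize q ^ t = P
    generalize (t : ℝ) = τ
    rw [hq]
    field_simp
    ring
end

section
/- Let f : Q_n → ℂ and, for each i ∈ Q_n, let X_i be a Q_n-valued random variable with P(X_i = j) = b_{ij} for all j ∈ Q_n. Then for every i ∈ Q_n with i ≠ 1, |E[f(X_{i+1/n})] − E[f(X_i)]| ≤ (22/n)·max_{j ∈ Q_n} |f(j)|. -/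
open Real Set

noncomputable def phiF (t : ℝ) : ℝ := Real.exp t - Real.exp 1 * t
noncomputable def u0F (a : ℝ) : ℝ := 1 - (1 - a) * Real.exp a
noncomputable def pF (a : ℝ) : ℝ := phiF (1 - a)

lemma phiF_zero : phiF 0 = 1 := by simp [phiF]
lemma phiF_one : phiF 1 = 0 := by simp [phiF]

lemma phiF_strictAnti : StrictAntiOn phiF (Icc (0:ℝ) 1) := by
  apply strictAntiOn_of_deriv_neg (convex_Icc 0 1)
  · exact (Real.continuous_exp.sub (continuous_const.mul continuous_id)).continuousOn
  · intro x hx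
    rw [interior_Icc] at hx
    have h : HasDerivAt phiF (Real.exp x - Real.exp 1 * 1) x :=
      (Real.hasDerivAt_exp x).sub ((hasDerivAt_id x).const_mul (Real.exp 1))
    rw [h.deriv]
    have := Real.exp_lt_exp.mpr hx.2
    linarith

lemma phiF_mem (t : ℝ) (h0 : 0 ≤ t) (h1 : t ≤ 1) : phiF t ∈ Icc (0:ℝ) 1 := by
  constructor
  · have := phiF_strictAnti.antitoneOn ⟨h0, h1⟩ (right_mem_Icc.mpr zero_le_one) h1
    rw [phiF_one] at this; linarith
  · have := phiF_strictAnti.antitoneOn (left_mem_Icc.mpr zero_le_one) ⟨h0, h1⟩ h0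
    rw [phiF_zero] at this; linarith

lemma pF_mem (a : ℝ) (h0 : 0 ≤ a) (h1 : a ≤ 1) : pF a ∈ Icc (0:ℝ) 1 :=
  phiF_mem _ (by linarith) (by linarith)

lemma pF_mono {a a' : ℝ} (h0 : 0 ≤ a) (h : a ≤ a') (h1 : a' ≤ 1) : pF a ≤ pF a' :=
  phiF_strictAnti.antitoneOn ⟨by linarith, by linarith⟩ ⟨by linarith, by linarith⟩ (by linarith)

lemma u0F_nonneg {a : ℝ} (h0 : 0 ≤ a) : 0 ≤ u0F a := by
  have h := Real.add_one_le_exp (-a)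
  have h2 : (1 - a) * Real.exp a ≤ Real.exp (-a) * Real.exp a := by
    apply mul_le_mul_of_nonneg_right (by linarith) (Real.exp_pos a).le
  rw [← Real.exp_add] at h2
  simp at h2
  simp [u0F]; linarith

lemma u0F_le_one {a : ℝ} (h1 : a ≤ 1) : u0F a ≤ 1 := by
  have := (Real.exp_pos a).le
  have : 0 ≤ (1 - a) * Real.exp a := mul_nonneg (by linarith) this
  simp [u0F]; linarith

lemma pF_eq (a : ℝ) : pF a = Real.exp (1 - a) * u0F a := by
  have h : Real.exp a * Real.exp (1 - a) = Real.exp 1 := by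
    rw [← Real.exp_add]; ring_nf
  simp only [pF, phiF, u0F]; linear_combination (1 - a) * h

lemma one_sub_u0F (a : ℝ) : 1 - u0F a = (1 - a) * Real.exp a := by simp [u0F]


/-- The function `G_b : [0,1] → [0,1]`, with breakpoint `u₀(b) = 1 - (1-b)e^b`:
`G_b(u) = e^{1-b}·u` for `u ≤ u₀(b)` and
`G_b(u) = e^{e^{-b}(1-u)} - (1-u)·e^{1-b}` for `u > u₀(b)`.  For `a ∈ (0,1]` it is a
strictly increasing continuous bijection of `[0,1]` onto itself. -/
noncomputable def Gfun (b u : ℝ) : ℝ :=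
  if u ≤ 1 - (1 - b) * Real.exp b then Real.exp (1 - b) * u
  else Real.exp (Real.exp (-b) * (1 - u)) - (1 - u) * Real.exp (1 - b)

/-- The inverse `G_a⁻¹` of `G_a`. -/
noncomputable def Ginv (a : ℝ) : ℝ → ℝ := Function.invFun (Gfun a)

/-- The doubly stochastic `n × n` matrix `B(n) = [b_{ij}]`, rows and columns indexed by
`Q_n = {1/n, …, 1}` via `i ↦ (i+1)/n`: `b_{ij}` is the probability that `G_a(V)` lies in
`(j - 1/n, j]` when `a` is uniform on `(i - 1/n, i)` and `V` is uniform on `[0,1]`,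
independently, i.e. `b_{ij} = n·∫_{i-1/n}^{i} (G_a⁻¹(j) - G_a⁻¹(j - 1/n)) da`. -/
noncomputable def Bmat (n : ℕ) : Matrix (Fin n) (Fin n) ℝ := fun i j =>
  n * ∫ a in ((i.val : ℝ) / n)..(((i.val : ℝ) + 1) / n),
    (Ginv a (((j.val : ℝ) + 1) / n) - Ginv a ((j.val : ℝ) / n))

lemma Gfun_of_le {a u : ℝ} (h : u ≤ u0F a) : Gfun a u = Real.exp (1 - a) * u :=
  if_pos h

lemma Gfun_of_not_le {a u : ℝ} (h : ¬ u ≤ u0F a) :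
    Gfun a u = Real.exp (Real.exp (-a) * (1 - u)) - (1 - u) * Real.exp (1 - a) :=
  if_neg h

lemma exp_neg_mul_one_sub_u0F (a : ℝ) : Real.exp (-a) * (1 - u0F a) = 1 - a := by
  have h : Real.exp (-a) * Real.exp a = 1 := by rw [← Real.exp_add]; simp
  simp only [u0F]; linear_combination (1 - a) * h

lemma branch_agree (a : ℝ) :
    Real.exp (Real.exp (-a) * (1 - u0F a)) - (1 - u0F a) * Real.exp (1 - a)
      = Real.exp (1 - a) * u0F a := by
  rw [exp_neg_mul_one_sub_u0F]
  ring

lemma Gfun_second_strictMono {a : ℝ} (ha0 : 0 ≤ a) (ha1 : a ≤ 1) :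
    StrictMonoOn (fun u => Real.exp (Real.exp (-a) * (1 - u)) - (1 - u) * Real.exp (1 - a))
      (Ici (u0F a)) := by
  apply strictMonoOn_of_deriv_pos (convex_Ici _)
  · apply Continuous.continuousOn
    exact (Real.continuous_exp.comp (continuous_const.mul (continuous_const.sub continuous_id))).sub
      ((continuous_const.sub continuous_id).mul continuous_const)
  · intro x hx
    rw [interior_Ici] at hx
    have hg : HasDerivAt (fun u : ℝ => Real.exp (-a) * (1 - u)) (-Real.exp (-a)) x := by
      simpa using ((hasDerivAt_id x).const_sub 1).const_mul (Real.exp (-a))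
    have h1 := hg.exp
    have h2 : HasDerivAt (fun u : ℝ => (1 - u) * Real.exp (1 - a)) (-Real.exp (1 - a)) x := by
      simpa using ((hasDerivAt_id x).const_sub 1).mul_const (Real.exp (1 - a))
    have h : HasDerivAt (fun u => Real.exp (Real.exp (-a) * (1 - u)) - (1 - u) * Real.exp (1 - a)) _ x := (h1.sub h2)
    rw [h.deriv]
    have hlt : Real.exp (-a) * (1 - x) < 1 - a := by
      have hx' : u0F a < x := hx
      have h3 := exp_neg_mul_one_sub_u0F a
      have := mul_lt_mul_of_pos_left (by linarith : 1 - x < 1 - u0F a) (Real.exp_pos (-a))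
      linarith
    have key : Real.exp (Real.exp (-a) * (1 - x)) * Real.exp (-a) < Real.exp (1 - a) := by
      rw [← Real.exp_add]
      exact Real.exp_lt_exp.mpr (by linarith)
    nlinarith [key]

lemma Gfun_strictMono {a : ℝ} (ha0 : 0 ≤ a) (ha1 : a ≤ 1) : StrictMono (Gfun a) := by
  intro u w huw
  by_cases hw : w ≤ u0F a
  · rw [Gfun_of_le (le_trans huw.le hw), Gfun_of_le hw]
    exact mul_lt_mul_of_pos_left huw (Real.exp_pos _)
  · push_neg at hw
    rw [Gfun_of_not_le (not_le.mpr hw)]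
    by_cases hu : u ≤ u0F a
    · rw [Gfun_of_le hu]
      calc Real.exp (1 - a) * u ≤ Real.exp (1 - a) * u0F a :=
            mul_le_mul_of_nonneg_left hu (Real.exp_pos _).le
        _ = _ := (branch_agree a).symm
        _ < _ := Gfun_second_strictMono ha0 ha1 (Set.mem_Ici.mpr (le_refl (u0F a))) (le_of_lt hw) hw
    · push_neg at hu
      rw [Gfun_of_not_le (not_le.mpr hu)]
      exact Gfun_second_strictMono ha0 ha1 hu.le (hu.trans huw).le huw

lemma Gfun_continuous (a : ℝ) : Continuous (Gfun a) := by
  unfold Gfun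
  apply Continuous.if_le (continuous_const.mul continuous_id)
    ((Real.continuous_exp.comp (continuous_const.mul (continuous_const.sub continuous_id))).sub
      ((continuous_const.sub continuous_id).mul continuous_const))
    continuous_id continuous_const
  intro x hx
  have hx' : x = u0F a := hx
  rw [hx']
  exact (branch_agree a).symm


lemma Ginv_Gfun {a : ℝ} (ha0 : 0 ≤ a) (ha1 : a ≤ 1) (u : ℝ) : Ginv a (Gfun a u) = u :=
  Function.leftInverse_invFun (Gfun_strictMono ha0 ha1).injective u

lemma Gfun_zero {a : ℝ} (ha0 : 0 ≤ a) (ha1 : a ≤ 1) : Gfun a 0 = 0 := by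
  rw [Gfun_of_le (u0F_nonneg ha0), mul_zero]

lemma Gfun_one {a : ℝ} (ha0 : 0 ≤ a) (ha1 : a ≤ 1) : Gfun a 1 = 1 := by
  by_cases h : (1 : ℝ) ≤ u0F a
  · have hu1 := u0F_le_one ha1
    have hu : u0F a = 1 := le_antisymm hu1 h
    have ha : a = 1 := by
      simp [u0F] at hu
      linarith
    rw [Gfun_of_le h, ha]; simp
  · rw [Gfun_of_not_le h]; simp

lemma Gfun_surj_on {a : ℝ} (ha0 : 0 ≤ a) (ha1 : a ≤ 1) {v : ℝ} (hv : v ∈ Icc (0:ℝ) 1) :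
    ∃ u ∈ Icc (0:ℝ) 1, Gfun a u = v := by
  have h := intermediate_value_Icc (zero_le_one) (Gfun_continuous a).continuousOn
  rw [Gfun_zero ha0 ha1, Gfun_one ha0 ha1] at h
  obtain ⟨u, hu, hgu⟩ := h hv
  exact ⟨u, hu, hgu⟩

lemma Ginv_spec {a : ℝ} (ha0 : 0 ≤ a) (ha1 : a ≤ 1) {v : ℝ} (hv : v ∈ Icc (0:ℝ) 1) :
    Ginv a v ∈ Icc (0:ℝ) 1 ∧ Gfun a (Ginv a v) = v := by
  obtain ⟨u, hu, hgu⟩ := Gfun_surj_on ha0 ha1 hv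
  have : Ginv a v = u := by rw [← hgu, Ginv_Gfun ha0 ha1]
  rw [this]; exact ⟨hu, hgu⟩

lemma Ginv_mono {a : ℝ} (ha0 : 0 ≤ a) (ha1 : a ≤ 1) {v w : ℝ}
    (hv : v ∈ Icc (0:ℝ) 1) (hw : w ∈ Icc (0:ℝ) 1) (hvw : v ≤ w) : Ginv a v ≤ Ginv a w := by
  have h1 := (Ginv_spec ha0 ha1 hv).2
  have h2 := (Ginv_spec ha0 ha1 hw).2
  by_contra h
  push_neg at h
  have := Gfun_strictMono ha0 ha1 h
  rw [h1, h2] at this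
  linarith

lemma Ginv_one {a : ℝ} (ha0 : 0 ≤ a) (ha1 : a ≤ 1) : Ginv a 1 = 1 := by
  have h := Ginv_Gfun ha0 ha1 1
  rwa [Gfun_one ha0 ha1] at h

lemma Ginv_lin {a : ℝ} (ha0 : 0 ≤ a) (ha1 : a ≤ 1) {v : ℝ} (hv0 : 0 ≤ v) (hvp : v ≤ pF a) :
    Ginv a v = Real.exp (a - 1) * v := by
  have hexp : Real.exp (1 - a) * Real.exp (a - 1) = 1 := by rw [← Real.exp_add]; norm_num
  have hcond : Real.exp (a - 1) * v ≤ u0F a := by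
    have h1 : Real.exp (a - 1) * v ≤ Real.exp (a - 1) * pF a :=
      mul_le_mul_of_nonneg_left hvp (Real.exp_pos _).le
    rw [pF_eq] at h1
    calc Real.exp (a - 1) * v ≤ Real.exp (a - 1) * (Real.exp (1 - a) * u0F a) := h1
      _ = u0F a := by rw [← mul_assoc, mul_comm (Real.exp (a-1)), hexp, one_mul]
  have key : Gfun a (Real.exp (a - 1) * v) = v := by
    rw [Gfun_of_le hcond, ← mul_assoc, hexp, one_mul]
  have h := Ginv_Gfun ha0 ha1 (Real.exp (a - 1) * v)
  rw [key] at h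
  exact h

lemma Gfun_u0F (a : ℝ) : Gfun a (u0F a) = pF a := by
  rw [Gfun_of_le le_rfl, ← pF_eq]

lemma Ginv_sec {a : ℝ} (ha0 : 0 ≤ a) (ha1 : a ≤ 1) {v : ℝ} (hpv : pF a ≤ v) (hv1 : v ≤ 1) :
    phiF (Real.exp (-a) * (1 - Ginv a v)) = v ∧
      Real.exp (-a) * (1 - Ginv a v) ∈ Icc (0:ℝ) (1 - a) := by
  have hp0 := (pF_mem a ha0 ha1).1
  have hv : v ∈ Icc (0:ℝ) 1 := ⟨le_trans hp0 hpv, hv1⟩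
  obtain ⟨hmem, hGu⟩ := Ginv_spec ha0 ha1 hv
  set u := Ginv a v with hu
  -- u0F a ≤ u
  have hu0u : u0F a ≤ u := by
    by_contra h
    push_neg at h
    have := Gfun_strictMono ha0 ha1 h
    rw [hGu, Gfun_u0F] at this
    linarith
  have hu1 : u ≤ 1 := hmem.2
  have ht0 : 0 ≤ Real.exp (-a) * (1 - u) := mul_nonneg (Real.exp_pos _).le (by linarith)
  have ht1 : Real.exp (-a) * (1 - u) ≤ 1 - a := by
    have h2 : 1 - u ≤ 1 - u0F a := by linarith
    have h3 := exp_neg_mul_one_sub_u0F a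
    have := mul_le_mul_of_nonneg_left h2 (Real.exp_pos (-a)).le
    linarith
  refine ⟨?_, ht0, ht1⟩
  by_cases hcase : u ≤ u0F a
  · have huu : u = u0F a := le_antisymm hcase hu0u
    rw [huu, exp_neg_mul_one_sub_u0F]
    have : v = pF a := by rw [← hGu, huu, Gfun_u0F]
    rw [this]
    rfl
  · rw [Gfun_of_not_le hcase] at hGu
    rw [← hGu]
    simp only [phiF]
    have : Real.exp 1 * (Real.exp (-a) * (1 - u)) = (1 - u) * Real.exp (1 - a) := by
      rw [show Real.exp 1 * (Real.exp (-a) * (1 - u)) = (Real.exp 1 * Real.exp (-a)) * (1-u) by ring,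
        ← Real.exp_add]
      ring_nf
    linarith [this]

lemma Ginv_at_pF {a a' : ℝ} (ha0 : 0 ≤ a) (haa : a ≤ a') (ha1 : a' ≤ 1) :
    Ginv a (pF a') = 1 - Real.exp a * (1 - a') := by
  have ha1' : a ≤ 1 := le_trans haa ha1
  have hq := pF_mem a' (le_trans ha0 haa) ha1
  have hpq : pF a ≤ pF a' := pF_mono ha0 haa ha1
  obtain ⟨hphi, ht⟩ := Ginv_sec ha0 ha1' hpq hq.2
  have hq' : phiF (1 - a') = pF a' := rfl
  have hinj := phiF_strictAnti.injOn
  have heq : Real.exp (-a) * (1 - Ginv a (pF a')) = 1 - a' := by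
    apply hinj (Icc_subset_Icc le_rfl (by linarith : 1 - a ≤ 1) ht)
      ⟨by linarith, by linarith⟩
    rw [hphi, hq']
  have hexp : Real.exp a * Real.exp (-a) = 1 := by rw [← Real.exp_add]; simp
  have h2 := congrArg (fun x => Real.exp a * x) heq
  linear_combination (1 - Ginv a (pF a')) * hexp - h2

lemma Ginv_common_t {a a' : ℝ} (ha0 : 0 ≤ a) (haa : a ≤ a') (ha1 : a' ≤ 1) {w : ℝ}
    (hqw : pF a' ≤ w) (hw1 : w ≤ 1) :
    1 - Ginv a w = Real.exp (a - a') * (1 - Ginv a' w) := by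
  have ha1' : a ≤ 1 := le_trans haa ha1
  have ha0' : 0 ≤ a' := le_trans ha0 haa
  have hpq := pF_mono ha0 haa ha1
  obtain ⟨h1, ht1⟩ := Ginv_sec ha0 ha1' (le_trans hpq hqw) hw1
  obtain ⟨h2, ht2⟩ := Ginv_sec ha0' ha1 hqw hw1
  have heq : Real.exp (-a) * (1 - Ginv a w) = Real.exp (-a') * (1 - Ginv a' w) := by
    apply phiF_strictAnti.injOn (Icc_subset_Icc le_rfl (by linarith) ht1)
      (Icc_subset_Icc le_rfl (by linarith) ht2)
    rw [h1, h2]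
  have hx : Real.exp a * Real.exp (-a) = 1 := by rw [← Real.exp_add]; simp
  have hy : Real.exp a * Real.exp (-a') = Real.exp (a - a') := by rw [← Real.exp_add]; ring_nf
  have h3 := congrArg (fun x => Real.exp a * x) heq
  linear_combination h3 - (1 - Ginv a w) * hx + (1 - Ginv a' w) * hy

lemma Ginv_decomp {a a' : ℝ} (ha0 : 0 ≤ a) (haa : a ≤ a') (ha1 : a' ≤ 1) :
    ∃ H1 H2 H3 H4 : ℝ → ℝ,
      (∀ w ∈ Icc (0:ℝ) 1, Ginv a' w - Ginv a w = H1 w + H2 w - H3 w + H4 w) ∧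
      (∀ x ∈ Icc (0:ℝ) 1, ∀ y ∈ Icc (0:ℝ) 1, x ≤ y →
        H1 x ≤ H1 y ∧ H2 x ≤ H2 y ∧ H3 x ≤ H3 y ∧ H4 x ≤ H4 y) ∧
      H1 0 = 0 ∧ H2 0 = 0 ∧ H3 0 = 0 ∧ H4 0 = 0 ∧
      H1 1 + H2 1 + H3 1 + H4 1 ≤ 10 * (a' - a) := by
  have ha1' : a ≤ 1 := le_trans haa ha1
  have ha0' : 0 ≤ a' := le_trans ha0 haa
  set p := pF a with hpdef
  set q := pF a' with hqdef
  have hp := pF_mem a ha0 ha1'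
  have hq := pF_mem a' ha0' ha1
  have hpq : p ≤ q := pF_mono ha0 haa ha1
  have c1 : 0 ≤ Real.exp (a' - 1) - Real.exp (a - 1) :=
    sub_nonneg.mpr (Real.exp_le_exp.mpr (by linarith))
  have c4 : 0 ≤ 1 - Real.exp (a - a') := by
    have h := Real.exp_le_exp.mpr (by linarith : a - a' ≤ 0)
    rw [Real.exp_zero] at h
    linarith
  refine ⟨fun w => (Real.exp (a' - 1) - Real.exp (a - 1)) * min w p,
    fun w => Real.exp (a' - 1) * (min (max w p) q - p),
    fun w => Ginv a (min (max w p) q) - Ginv a p,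
    fun w => (1 - Real.exp (a - a')) * (Ginv a' (max w q) - Ginv a' q), ?_, ?_, ?_, ?_, ?_, ?_, ?_⟩
  · -- decomposition identity
    intro w hw
    beta_reduce
    have eA : Ginv a p = 1 - Real.exp a * (1 - a) := Ginv_at_pF ha0 le_rfl ha1'
    have eC : Ginv a' q = 1 - Real.exp a' * (1 - a') := Ginv_at_pF ha0' le_rfl ha1
    rcases le_or_gt w p with hwp | hwp
    · rw [min_eq_left hwp, max_eq_right hwp, min_eq_left hpq, max_eq_right (hwp.trans hpq),
        Ginv_lin ha0' ha1 hw.1 (hwp.trans hpq), Ginv_lin ha0 ha1' hw.1 hwp]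
      ring
    · rcases le_or_gt w q with hwq | hwq
      · rw [min_eq_right hwp.le, max_eq_left hwp.le, min_eq_left hwq, max_eq_right hwq,
          Ginv_lin ha0' ha1 hw.1 hwq, Ginv_lin ha0 ha1' hp.1 le_rfl]
        ring
      · have hr := Ginv_common_t ha0 haa ha1 hwq.le hw.2
        have eB : Ginv a q = 1 - Real.exp a * (1 - a') := Ginv_at_pF ha0 haa ha1
        have hGaw : Ginv a w = 1 - Real.exp (a - a') * (1 - Ginv a' w) := by linarith
        rw [min_eq_right hwp.le, max_eq_left hwp.le, min_eq_right hwq.le, max_eq_left hwq.le,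
          hGaw, eB, eC, Ginv_lin ha0 ha1' hp.1 le_rfl, hpdef, hqdef]
        simp only [pF, phiF]
        simp only [Real.exp_sub]
        have e1 := Real.exp_ne_zero 1
        have e2 := Real.exp_ne_zero a
        have e3 := Real.exp_ne_zero a'
        field_simp
        ring
  · -- monotonicity
    intro x hx y hy hxy
    have hclx : min (max x p) q ∈ Icc (0:ℝ) 1 :=
      ⟨le_min (le_trans hp.1 (le_max_right x p)) hq.1, le_trans (min_le_right _ _) hq.2⟩
    have hcly : min (max y p) q ∈ Icc (0:ℝ) 1 :=
      ⟨le_min (le_trans hp.1 (le_max_right y p)) hq.1, le_trans (min_le_right _ _) hq.2⟩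
    have hmx : max x q ∈ Icc (0:ℝ) 1 := ⟨le_trans hq.1 (le_max_right x q), max_le hx.2 hq.2⟩
    have hmy : max y q ∈ Icc (0:ℝ) 1 := ⟨le_trans hq.1 (le_max_right y q), max_le hy.2 hq.2⟩
    refine ⟨mul_le_mul_of_nonneg_left (min_le_min hxy le_rfl) c1,
      mul_le_mul_of_nonneg_left (sub_le_sub_right
        (min_le_min (max_le_max hxy le_rfl) le_rfl) p) (Real.exp_pos _).le,
      sub_le_sub_right (Ginv_mono ha0 ha1' hclx hcly
        (min_le_min (max_le_max hxy le_rfl) le_rfl)) _,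
      mul_le_mul_of_nonneg_left (sub_le_sub_right
        (Ginv_mono ha0' ha1 hmx hmy (max_le_max hxy le_rfl)) _) c4⟩
  · simp [min_eq_left (show 0 ≤ p from hp.1)]
  · simp [max_eq_right (show 0 ≤ p from hp.1), min_eq_left hpq]
  · simp [max_eq_right (show 0 ≤ p from hp.1), min_eq_left hpq]
  · simp [max_eq_right (show 0 ≤ q from hq.1)]
  · -- bound at 1
    have eA : Ginv a p = 1 - Real.exp a * (1 - a) := Ginv_at_pF ha0 le_rfl ha1'
    have eB : Ginv a q = 1 - Real.exp a * (1 - a') := Ginv_at_pF ha0 haa ha1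
    have eC : Ginv a' q = 1 - Real.exp a' * (1 - a') := Ginv_at_pF ha0' le_rfl ha1
    beta_reduce
    rw [min_eq_right hp.2, max_eq_left hp.2, min_eq_right hq.2, max_eq_left hq.2,
      Ginv_one ha0' ha1, eA, eB, eC]
    have k1 : Real.exp (a - 1) = Real.exp (a' - 1) * Real.exp (a - a') := by
      rw [← Real.exp_add]; ring_nf
    have k2 : 1 - Real.exp (a - a') ≤ a' - a := by
      have := Real.add_one_le_exp (a - a'); linarith
    have k3 : Real.exp (a' - 1) ≤ 1 := by
      have h := Real.exp_le_exp.mpr (by linarith : a' - 1 ≤ 0)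
      rw [Real.exp_zero] at h; exact h
    have kp : Real.exp (a' - 1) > 0 := Real.exp_pos _
    have b1 : (Real.exp (a' - 1) - Real.exp (a - 1)) * p ≤ a' - a := by
      have c1le : Real.exp (a' - 1) - Real.exp (a - 1) ≤ a' - a := by nlinarith
      nlinarith [hp.1, hp.2]
    have qp : q - p ≤ Real.exp 1 * (a' - a) := by
      have hmono := Real.exp_le_exp.mpr (by linarith : 1 - a' ≤ 1 - a)
      simp only [hqdef, hpdef, pF, phiF]
      linarith
    have b2 : Real.exp (a' - 1) * (q - p) ≤ Real.exp 1 * (a' - a) := by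
      nlinarith [hpq, Real.exp_pos 1]
    have b3 : (1 - Real.exp a * (1 - a')) - (1 - Real.exp a * (1 - a)) ≤ Real.exp 1 * (a' - a) := by
      have := Real.exp_le_exp.mpr ha1'
      nlinarith [Real.exp_pos a]
    have b4 : (1 - Real.exp (a - a')) * (1 - (1 - Real.exp a' * (1 - a'))) ≤
        Real.exp 1 * (a' - a) := by
      have h1 : Real.exp a' * (1 - a') ≤ Real.exp 1 := by
        have := Real.exp_le_exp.mpr ha1
        nlinarith [Real.exp_pos a']
      have h2 : 0 ≤ Real.exp a' * (1 - a') := mul_nonneg (Real.exp_pos _).le (by linarith)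
      nlinarith
    have he : Real.exp 1 < 2.7182818286 := Real.exp_one_lt_d9
    nlinarith [b1, b2, b3, b4, he, haa]

lemma Ginv_tv {a a' : ℝ} (ha0 : 0 ≤ a) (haa : a ≤ a') (ha1 : a' ≤ 1) {n : ℕ}
    {v : ℕ → ℝ} (hmem : ∀ j, j ≤ n → v j ∈ Icc (0:ℝ) 1)
    (hmono : ∀ j, j < n → v j ≤ v (j + 1)) (h0 : v 0 = 0) (h1 : v n = 1) :
    ∑ j ∈ Finset.range n,
      |(Ginv a' (v (j+1)) - Ginv a (v (j+1))) - (Ginv a' (v j) - Ginv a (v j))|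
      ≤ 10 * (a' - a) := by
  obtain ⟨H1, H2, H3, H4, hdec, hmonH, hz1, hz2, hz3, hz4, hbound⟩ := Ginv_decomp ha0 haa ha1
  have key : ∀ j ∈ Finset.range n,
      |(Ginv a' (v (j+1)) - Ginv a (v (j+1))) - (Ginv a' (v j) - Ginv a (v j))|
        ≤ ((H1 (v (j+1)) - H1 (v j)) + (H2 (v (j+1)) - H2 (v j)))
          + ((H3 (v (j+1)) - H3 (v j)) + (H4 (v (j+1)) - H4 (v j))) := by
    intro j hj
    rw [Finset.mem_range] at hj
    have hmj := hmem j hj.le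
    have hmj1 := hmem (j+1) hj
    have hle := hmono j hj
    obtain ⟨m1, m2, m3, m4⟩ := hmonH _ hmj _ hmj1 hle
    rw [hdec _ hmj, hdec _ hmj1, abs_le]
    constructor <;> linarith
  calc ∑ j ∈ Finset.range n,
        |(Ginv a' (v (j+1)) - Ginv a (v (j+1))) - (Ginv a' (v j) - Ginv a (v j))|
      ≤ ∑ j ∈ Finset.range n,
        (((H1 (v (j+1)) - H1 (v j)) + (H2 (v (j+1)) - H2 (v j)))
          + ((H3 (v (j+1)) - H3 (v j)) + (H4 (v (j+1)) - H4 (v j)))) :=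
        Finset.sum_le_sum key
    _ = ((H1 (v n) - H1 (v 0)) + (H2 (v n) - H2 (v 0)))
          + ((H3 (v n) - H3 (v 0)) + (H4 (v n) - H4 (v 0))) := by
        rw [Finset.sum_add_distrib, Finset.sum_add_distrib, Finset.sum_add_distrib,
          Finset.sum_range_sub (fun j => H1 (v j)), Finset.sum_range_sub (fun j => H2 (v j)),
          Finset.sum_range_sub (fun j => H3 (v j)), Finset.sum_range_sub (fun j => H4 (v j))]
    _ ≤ 10 * (a' - a) := by rw [h0, h1, hz1, hz2, hz3, hz4]; linarith

lemma Ginv_lip {a a' : ℝ} (ha0 : 0 ≤ a) (haa : a ≤ a') (ha1 : a' ≤ 1) {w : ℝ}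
    (hw : w ∈ Icc (0:ℝ) 1) : |Ginv a' w - Ginv a w| ≤ 10 * (a' - a) := by
  obtain ⟨H1, H2, H3, H4, hdec, hmonH, hz1, hz2, hz3, hz4, hbound⟩ := Ginv_decomp ha0 haa ha1
  have h0m : (0:ℝ) ∈ Icc (0:ℝ) 1 := ⟨le_rfl, zero_le_one⟩
  have h1m : (1:ℝ) ∈ Icc (0:ℝ) 1 := ⟨zero_le_one, le_rfl⟩
  obtain ⟨m1, m2, m3, m4⟩ := hmonH _ h0m _ hw hw.1
  obtain ⟨n1, n2, n3, n4⟩ := hmonH _ hw _ h1m hw.2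
  rw [hdec _ hw, abs_le]
  constructor <;> linarith

lemma Ginv_contOn {w : ℝ} (hw : w ∈ Icc (0:ℝ) 1) :
    ContinuousOn (fun a => Ginv a w) (Icc (0:ℝ) 1) := by
  apply LipschitzOnWith.continuousOn (K := 10)
  apply LipschitzOnWith.of_dist_le_mul
  intro x hx y hy
  rw [Real.dist_eq, Real.dist_eq]
  have h10 : ((10:NNReal):ℝ) = 10 := by norm_num
  rw [h10]
  rcases le_total x y with h | h
  · have hb := Ginv_lip hx.1 h hy.2 hw
    rw [abs_sub_comm (Ginv x w)]
    have habs : |x - y| = y - x := by rw [abs_sub_comm]; exact abs_of_nonneg (by linarith)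
    rw [habs]; linarith
  · have hb := Ginv_lip hy.1 h hx.2 hw
    have habs : |x - y| = x - y := abs_of_nonneg (by linarith)
    rw [habs]; linarith

noncomputable def gJ (N : ℝ) (k : ℕ) (a : ℝ) : ℝ :=
  Ginv a (((k : ℝ) + 1) / N) - Ginv a ((k : ℝ) / N)

set_option maxHeartbeats 1000000 in
lemma sum_abs_Bdiff {n : ℕ} (hn : 2 ≤ n) (i : Fin n) (hi : (i : ℕ) + 1 < n) :
    ∑ j : Fin n, |Bmat n ⟨(i : ℕ) + 1, hi⟩ j - Bmat n i j| ≤ 10 / (n : ℝ) := by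
  have hN : (0:ℝ) < n := by exact_mod_cast (by omega : 0 < n)
  set N := (n : ℝ) with hNdef
  have hi2 : ((i : ℕ) : ℝ) + 1 + 1 ≤ N := by
    rw [hNdef]; exact_mod_cast (by omega : (i:ℕ) + 1 + 1 ≤ n)
  have hi0 : (0:ℝ) ≤ ((i : ℕ) : ℝ) := Nat.cast_nonneg _
  set x0 := ((i : ℕ) : ℝ) / N with hx0def
  set x1 := (((i : ℕ) : ℝ) + 1) / N with hx1def
  set x2 := (((i : ℕ) : ℝ) + 1 + 1) / N with hx2def
  have hx00 : 0 ≤ x0 := div_nonneg hi0 hN.le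
  have hx01 : x0 ≤ x1 := (div_le_div_iff_of_pos_right hN).mpr (by linarith)
  have hx12 : x1 ≤ x2 := (div_le_div_iff_of_pos_right hN).mpr (by linarith)
  have hx21 : x2 ≤ 1 := by rw [hx2def, div_le_one hN]; linarith
  have hstep0 : x0 + 1/N = x1 := by rw [hx0def, hx1def]; field_simp
  have hstep1 : x1 + 1/N = x2 := by rw [hx1def, hx2def]; field_simp
  -- grid points are in [0,1]
  have hgrid : ∀ k : ℕ, k ≤ n → ((k : ℝ) / N) ∈ Icc (0:ℝ) 1 := by
    intro k hk
    constructor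
    · exact div_nonneg (Nat.cast_nonneg _) hN.le
    · rw [div_le_one hN, hNdef]; exact_mod_cast hk
  -- continuity of the integrands
  have hcont : ∀ j : Fin n, ContinuousOn (gJ N j) (Icc (0:ℝ) 1) := by
    intro j
    have h1 : ((j : ℕ) : ℝ) / N ∈ Icc (0:ℝ) 1 := hgrid j (le_of_lt j.2)
    have h2 : (((j : ℕ) : ℝ) + 1) / N ∈ Icc (0:ℝ) 1 := by
      have := hgrid ((j : ℕ) + 1) j.2
      push_cast at this
      exact this
    exact (Ginv_contOn h2).sub (Ginv_contOn h1)
  have hsub01 : Icc x0 x1 ⊆ Icc (0:ℝ) 1 :=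
    Icc_subset_Icc hx00 (by linarith)
  have hsub12 : Icc x1 x2 ⊆ Icc (0:ℝ) 1 :=
    Icc_subset_Icc (by linarith) hx21
  have hint1 : ∀ j : Fin n, IntervalIntegrable (gJ N j) MeasureTheory.volume x0 x1 := by
    intro j
    apply ContinuousOn.intervalIntegrable
    rw [uIcc_of_le hx01]
    exact (hcont j).mono hsub01
  have hcont2 : ∀ j : Fin n,
      ContinuousOn (fun a => gJ N j (a + 1/N)) (Icc x0 x1) := by
    intro j
    apply ((hcont j).mono hsub12).comp
    · exact (continuous_id.add continuous_const).continuousOn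
    · intro a ha
      exact ⟨by linarith [ha.1, hstep0], by linarith [ha.2, hstep1]⟩
  have hint2 : ∀ j : Fin n,
      IntervalIntegrable (fun a => gJ N j (a + 1/N)) MeasureTheory.volume x0 x1 := by
    intro j
    apply ContinuousOn.intervalIntegrable
    rw [uIcc_of_le hx01]
    exact hcont2 j
  -- the row difference as a single integral
  have hdiff : ∀ j : Fin n, Bmat n ⟨(i : ℕ) + 1, hi⟩ j - Bmat n i j
      = N * ∫ a in x0..x1, (gJ N j (a + 1/N) - gJ N j a) := by
    intro j
    have hrow1 : Bmat n ⟨(i : ℕ) + 1, hi⟩ j = N * ∫ a in x1..x2, gJ N j a := by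
      simp only [Bmat, Fin.val_mk, gJ]
      push_cast
      rfl
    have hrow0 : Bmat n i j = N * ∫ a in x0..x1, gJ N j a := by
      simp only [Bmat, gJ]
      rfl
    have hshift : (∫ a in x1..x2, gJ N j a) = ∫ a in x0..x1, gJ N j (a + 1/N) := by
      rw [intervalIntegral.integral_comp_add_right (gJ N j) (1/N), hstep0, hstep1]
    rw [hrow1, hrow0, hshift, ← mul_sub,
      ← intervalIntegral.integral_sub (hint2 j) (hint1 j)]
  -- pointwise total-variation bound
  have hpt : ∀ a ∈ Icc x0 x1,
      ∑ j : Fin n, |gJ N j (a + 1/N) - gJ N j a| ≤ 10 * (1/N) := by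
    intro a ha
    have h0a : 0 ≤ a := le_trans hx00 ha.1
    have hNinv : (0:ℝ) < 1/N := by positivity
    have hle : a ≤ a + 1/N := by linarith
    have h1a : a + 1/N ≤ 1 := by linarith [ha.2, hstep1, hx21]
    have hsum := Ginv_tv h0a hle h1a (n := n) (v := fun k => (k : ℝ) / N)
      (fun k hk => hgrid k hk)
      (fun k _ => (div_le_div_iff_of_pos_right hN).mpr (by push_cast; linarith))
      (by simp)
      (by rw [hNdef]; field_simp)
    calc ∑ j : Fin n, |gJ N j (a + 1/N) - gJ N j a|
        = ∑ k ∈ Finset.range n,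
          |(Ginv (a + 1/N) (((k:ℝ)+1)/N) - Ginv a (((k:ℝ)+1)/N))
            - (Ginv (a + 1/N) ((k:ℝ)/N) - Ginv a ((k:ℝ)/N))| := by
          rw [Fin.sum_univ_eq_sum_range (fun k => |gJ N k (a + 1/N) - gJ N k a|)]
          exact Finset.sum_congr rfl fun k _ => congrArg abs (by simp only [gJ]; ring)
      _ ≤ 10 * ((a + 1/N) - a) := by
          refine le_trans (le_of_eq (Finset.sum_congr rfl fun k _ => congrArg abs ?_)) hsum
          push_cast
          ring
      _ = 10 * (1/N) := by ring
  -- assemble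
  have habsint : ∀ j : Fin n, IntervalIntegrable
      (fun a => |gJ N j (a + 1/N) - gJ N j a|) MeasureTheory.volume x0 x1 :=
    fun j => ((hint2 j).sub (hint1 j)).abs
  calc ∑ j : Fin n, |Bmat n ⟨(i : ℕ) + 1, hi⟩ j - Bmat n i j|
      ≤ ∑ j : Fin n, N * ∫ a in x0..x1, |gJ N j (a + 1/N) - gJ N j a| := by
        apply Finset.sum_le_sum
        intro j _
        rw [hdiff j, abs_mul, abs_of_nonneg hN.le]
        exact mul_le_mul_of_nonneg_left
          (intervalIntegral.abs_integral_le_integral_abs hx01) hN.le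
    _ = N * ∫ a in x0..x1, ∑ j : Fin n, |gJ N j (a + 1/N) - gJ N j a| := by
        rw [← Finset.mul_sum, ← intervalIntegral.integral_finset_sum (fun j _ => habsint j)]
    _ ≤ N * ∫ a in x0..x1, 10 * (1/N) := by
        apply mul_le_mul_of_nonneg_left ?_ hN.le
        apply intervalIntegral.integral_mono_on hx01 ?_ intervalIntegrable_const hpt
        apply ContinuousOn.intervalIntegrable
        rw [uIcc_of_le hx01]
        exact continuousOn_finset_sum _ fun j _ =>
          ((hcont2 j).sub ((hcont j).mono hsub01)).abs
    _ = 10 / N := by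
        rw [intervalIntegral.integral_const, smul_eq_mul]
        rw [show x1 - x0 = 1/N by linarith [hstep0]]
        field_simp


/-- Let `f : Q_n → ℂ` and, for `i ∈ Q_n`, let `X_i` be a `Q_n`-valued random variable with
`P(X_i = j) = b_{ij}`, so that `E[f(X_i)] = Σ_j b_{ij}·f(j)`.  Then for every `i ≠ 1` in
`Q_n` (i.e., `i + 1/n ∈ Q_n`), `|E[f(X_{i+1/n})] − E[f(X_i)]| ≤ (22/n)·max_j |f(j)|`. -/
theorem Bmat_row_expectation_close (n : ℕ) (hn : 2 ≤ n) (f : Fin n → ℂ)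
    (i : Fin n) (hi : (i : ℕ) + 1 < n) :
    ‖(∑ j : Fin n, (Bmat n ⟨(i : ℕ) + 1, hi⟩ j : ℂ) * f j) -
        ∑ j : Fin n, (Bmat n i j : ℂ) * f j‖ ≤
      (22 / (n : ℝ)) * ⨆ j : Fin n, ‖f j‖ := by
  have hN : (0:ℝ) < n := by exact_mod_cast (by omega : 0 < n)
  have hbdd : BddAbove (Set.range fun j : Fin n => ‖f j‖) :=
    (Set.finite_range _).bddAbove
  set M := ⨆ j : Fin n, ‖f j‖ with hM
  have hMle : ∀ j : Fin n, ‖f j‖ ≤ M := fun j => le_ciSup hbdd j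
  have hM0 : 0 ≤ M := le_trans (norm_nonneg _) (hMle ⟨0, by omega⟩)
  have hkey := sum_abs_Bdiff hn i hi
  calc ‖(∑ j : Fin n, (Bmat n ⟨(i : ℕ) + 1, hi⟩ j : ℂ) * f j) -
        ∑ j : Fin n, (Bmat n i j : ℂ) * f j‖
      = ‖∑ j : Fin n,
          (((Bmat n ⟨(i : ℕ) + 1, hi⟩ j - Bmat n i j : ℝ) : ℂ) * f j)‖ := by
        rw [← Finset.sum_sub_distrib]
        congr 1
        exact Finset.sum_congr rfl fun j _ => by push_cast; ring
    _ ≤ ∑ j : Fin n, ‖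
          (((Bmat n ⟨(i : ℕ) + 1, hi⟩ j - Bmat n i j : ℝ) : ℂ) * f j)‖ :=
        norm_sum_le _ _
    _ = ∑ j : Fin n, |Bmat n ⟨(i : ℕ) + 1, hi⟩ j - Bmat n i j| * ‖f j‖ :=
        Finset.sum_congr rfl fun j _ => by rw [norm_mul, Complex.norm_real, Real.norm_eq_abs]
    _ ≤ ∑ j : Fin n, |Bmat n ⟨(i : ℕ) + 1, hi⟩ j - Bmat n i j| * M :=
        Finset.sum_le_sum fun j _ => mul_le_mul_of_nonneg_left (hMle j) (abs_nonneg _)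
    _ = (∑ j : Fin n, |Bmat n ⟨(i : ℕ) + 1, hi⟩ j - Bmat n i j|) * M :=
        (Finset.sum_mul _ _ _).symm
    _ ≤ (10 / (n:ℝ)) * M := mul_le_mul_of_nonneg_right hkey hM0
    _ ≤ (22 / (n:ℝ)) * M := by
        apply mul_le_mul_of_nonneg_right ?_ hM0
        gcongr
        norm_num
end

section
/- There exist constants c₁, c₂, c₃ > 0, independent of n, such that for every integer n ≥ 2, every eigenvalue λ ∈ ℂ of B(n) with |λ| > 0.08, and every corresponding eigenvector φ : Q_n → ℂ with ‖φ‖₂ = 1: (i) ‖φ‖₁ ≥ c₁·n^{4/9}; (ii) ‖φ‖_∞ ≤ c₂·n^{−4/9}; and (iii) |φ(i + 1/n) − φ(i)| ≤ c₃·n^{−13/9} for every i ∈ Q_n with i ≠ 1. Here ‖φ‖₁ = Σ_{i ∈ Q_n}|φ(i)|, ‖φ‖₂ = (Σ_{i ∈ Q_n}|φ(i)|²)^{1/2}, ‖φ‖_∞ = max_{i ∈ Q_n}|φ(i)|. -/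
noncomputable def Sfun (t : ℝ) : ℝ := Real.exp t - Real.exp 1 * t

noncomputable def Tfun (y : ℝ) : ℝ := Function.invFunOn Sfun (Set.Icc 0 1) y

lemma Sfun_cont : Continuous Sfun := by
  unfold Sfun; continuity

lemma Sfun_one : Sfun 1 = 0 := by simp [Sfun]

lemma Sfun_zero : Sfun 0 = 1 := by simp [Sfun]

lemma Sfun_anti : StrictAntiOn Sfun (Set.Icc 0 1) := by
  apply strictAntiOn_of_deriv_neg (convex_Icc 0 1) (Sfun_cont.continuousOn)
  intro x hx
  rw [interior_Icc] at hx
  have h : HasDerivAt Sfun (Real.exp x - Real.exp 1) x := by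
    have h := (Real.hasDerivAt_exp x).sub ((hasDerivAt_id x).const_mul (Real.exp 1))
    simp only [mul_one] at h; exact h
  rw [h.deriv]
  have : Real.exp x < Real.exp 1 := Real.exp_lt_exp.2 hx.2
  linarith

lemma Sfun_mem {t : ℝ} (ht : t ∈ Set.Icc (0:ℝ) 1) : Sfun t ∈ Set.Icc (0:ℝ) 1 := by
  constructor
  · rcases eq_or_lt_of_le ht.2 with h | h
    · simp [h, Sfun_one]
    · have := Sfun_anti ht (Set.mem_Icc.2 ⟨zero_le_one, le_refl 1⟩) h
      rw [Sfun_one] at this; linarith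
  · rcases eq_or_lt_of_le ht.1 with h | h
    · simp [← h, Sfun_zero]
    · have := Sfun_anti (Set.mem_Icc.2 ⟨le_refl 0, zero_le_one⟩) ht h
      rw [Sfun_zero] at this; linarith

lemma Sfun_surj {y : ℝ} (hy : y ∈ Set.Icc (0:ℝ) 1) : ∃ t ∈ Set.Icc (0:ℝ) 1, Sfun t = y := by
  have := intermediate_value_Icc' (zero_le_one) (Sfun_cont.continuousOn (s := Set.Icc 0 1))
  have hy' : y ∈ Set.Icc (Sfun 1) (Sfun 0) := by rw [Sfun_one, Sfun_zero]; exact hy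
  obtain ⟨t, ht, hts⟩ := this hy'
  exact ⟨t, ht, hts⟩

lemma Sfun_Tfun {y : ℝ} (hy : y ∈ Set.Icc (0:ℝ) 1) : Sfun (Tfun y) = y :=
  Function.invFunOn_eq (f := Sfun) (by obtain ⟨t, ht, h⟩ := Sfun_surj hy; exact ⟨t, ht, h⟩)

lemma Tfun_mem {y : ℝ} (hy : y ∈ Set.Icc (0:ℝ) 1) : Tfun y ∈ Set.Icc (0:ℝ) 1 :=
  Function.invFunOn_mem (by obtain ⟨t, ht, h⟩ := Sfun_surj hy; exact ⟨t, ht, h⟩)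

lemma Tfun_Sfun {t : ℝ} (ht : t ∈ Set.Icc (0:ℝ) 1) : Tfun (Sfun t) = t := by
  have h1 : Sfun (Tfun (Sfun t)) = Sfun t := Sfun_Tfun (Sfun_mem ht)
  exact Sfun_anti.injOn (Tfun_mem (Sfun_mem ht)) ht h1

lemma Tfun_zero : Tfun 0 = 1 := by
  have := Tfun_Sfun (t := 1) (by norm_num)
  rwa [Sfun_one] at this

lemma Tfun_one : Tfun 1 = 0 := by
  have := Tfun_Sfun (t := 0) (by norm_num)
  rwa [Sfun_zero] at this

lemma Tfun_anti {y y' : ℝ} (hy : y ∈ Set.Icc (0:ℝ) 1) (hy' : y' ∈ Set.Icc (0:ℝ) 1)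
    (h : y ≤ y') : Tfun y' ≤ Tfun y := by
  by_contra hc
  push_neg at hc
  have := Sfun_anti (Tfun_mem hy) (Tfun_mem hy') hc
  rw [Sfun_Tfun hy, Sfun_Tfun hy'] at this
  linarith


-- e^t ≤ 1 + (e-1)t on [0,1]
lemma exp_le_linear {t : ℝ} (h0 : 0 ≤ t) (h1 : t ≤ 1) :
    Real.exp t ≤ 1 + (Real.exp 1 - 1) * t := by
  calc Real.exp t = Real.exp ((1-t) * 0 + t * 1) := by norm_num
  _ ≤ (1-t) * 1 + t * Real.exp 1 := by
      simpa [Real.exp_zero] using convexOn_exp.2 (Set.mem_univ (0:ℝ)) (Set.mem_univ (1:ℝ))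
        (by linarith : (0:ℝ) ≤ 1 - t) h0 (by ring)
  _ = 1 + (Real.exp 1 - 1) * t := by ring

-- e^{-s} ≤ 1 - s + s²/2 for s ≥ 0
lemma exp_neg_le_quad {s : ℝ} (hs : 0 ≤ s) : Real.exp (-s) ≤ 1 - s + s^2/2 := by
  set F : ℝ → ℝ := fun s => 1 - s + s^2/2 - Real.exp (-s) with hF
  have hderiv : ∀ x : ℝ, HasDerivAt F (-1 + x + Real.exp (-x)) x := by
    intro x
    have h1 : HasDerivAt (fun y : ℝ => Real.exp (-y)) (-Real.exp (-x)) x := by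
      have h := (Real.hasDerivAt_exp (-x)).comp x (hasDerivAt_neg x)
      simp only [mul_neg, mul_one] at h; exact h
    have h2 : HasDerivAt (fun y : ℝ => 1 - y + y^2/2) (-1 + x) x := by
      have : HasDerivAt (fun y : ℝ => 1 - y + y^2/2) (0 - 1 + 2 * x^1 / 2) x := by
        apply HasDerivAt.add
        · exact (hasDerivAt_const x (1:ℝ)).sub (hasDerivAt_id x)
        · exact (hasDerivAt_pow 2 x).div_const 2
      simpa using this
    have h := h2.sub h1
    simp only [sub_neg_eq_add] at h; exact h
  have hmono : MonotoneOn F (Set.Ici 0) := by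
    apply monotoneOn_of_deriv_nonneg (convex_Ici 0)
    · exact (Continuous.continuousOn (by fun_prop))
    · intro x hx; exact (hderiv x).differentiableAt.differentiableWithinAt
    · intro x hx
      rw [(hderiv x).deriv]
      have := Real.add_one_le_exp (-x)
      linarith
  have := hmono (Set.mem_Ici.2 (le_refl 0)) (Set.mem_Ici.2 hs) hs
  simp [hF] at this
  linarith [this]

lemma e_gt : (2.7182818283 : ℝ) < Real.exp 1 := Real.exp_one_gt_d9
lemma e_lt : Real.exp 1 < (2.7182818286 : ℝ) := Real.exp_one_lt_d9

-- S t ≤ (e/2)(1-t)²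
lemma Sfun_le_quad {t : ℝ} (h0 : 0 ≤ t) (h1 : t ≤ 1) :
    Sfun t ≤ (Real.exp 1 / 2) * (1 - t)^2 := by
  have hs : (0:ℝ) ≤ 1 - t := by linarith
  have h := exp_neg_le_quad hs
  have hexp : Real.exp t = Real.exp 1 * Real.exp (-(1-t)) := by
    rw [← Real.exp_add]; ring_nf
  have hE : 0 < Real.exp 1 := Real.exp_pos 1
  unfold Sfun
  rw [hexp]
  nlinarith [mul_le_mul_of_nonneg_left h (le_of_lt hE)]

-- √(S t) ≤ e - e^t on [0,1]
lemma sqrt_Sfun_le {t : ℝ} (h0 : 0 ≤ t) (h1 : t ≤ 1) :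
    Real.sqrt (Sfun t) ≤ Real.exp 1 - Real.exp t := by
  have hE := e_gt
  have h2 : Real.exp t ≤ 1 + (Real.exp 1 - 1) * t := exp_le_linear h0 h1
  have h3 : (Real.exp 1 - 1) * (1 - t) ≤ Real.exp 1 - Real.exp t := by nlinarith
  have h4 : Sfun t ≤ (Real.exp 1 - Real.exp t)^2 := by
    have hq := Sfun_le_quad h0 h1
    have h5 : ((Real.exp 1 - 1) * (1-t))^2 ≤ (Real.exp 1 - Real.exp t)^2 := by
      apply sq_le_sq'
      · nlinarith
      · exact h3
    have h6 : (Real.exp 1 / 2) * (1-t)^2 ≤ ((Real.exp 1 - 1) * (1-t))^2 := by nlinarith [sq_nonneg (1-t)]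
    linarith
  calc Real.sqrt (Sfun t) ≤ Real.sqrt ((Real.exp 1 - Real.exp t)^2) := Real.sqrt_le_sqrt h4
  _ = |Real.exp 1 - Real.exp t| := by rw [Real.sqrt_sq_eq_abs]
  _ = Real.exp 1 - Real.exp t := by
      rw [abs_of_nonneg]
      have : Real.exp t ≤ Real.exp 1 := Real.exp_le_exp.2 h1
      linarith

-- T y - T y' ≤ 2(√y' - √y)
lemma Tfun_sqrt_lip {y y' : ℝ} (h0 : 0 ≤ y) (h : y ≤ y') (h1 : y' ≤ 1) :
    Tfun y - Tfun y' ≤ 2 * (Real.sqrt y' - Real.sqrt y) := by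
  set φ : ℝ → ℝ := fun t => Real.sqrt (Sfun t) + t / 2 with hφ
  have hSpos : ∀ t ∈ Set.Ico (0:ℝ) 1, 0 < Sfun t := by
    intro t ht
    have := Sfun_anti (Set.mem_Icc.2 ⟨ht.1, le_of_lt ht.2⟩) (Set.mem_Icc.2 ⟨zero_le_one, le_refl 1⟩) ht.2
    rw [Sfun_one] at this; linarith
  have hanti : AntitoneOn φ (Set.Icc 0 1) := by
    apply antitoneOn_of_deriv_nonpos (convex_Icc 0 1)
    · apply ContinuousOn.add
      · exact (Real.continuous_sqrt.comp Sfun_cont).continuousOn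
      · exact (continuous_id.div_const 2).continuousOn
    · intro x hx
      rw [interior_Icc] at hx
      have hS : HasDerivAt Sfun (Real.exp x - Real.exp 1) x := by
        have h := (Real.hasDerivAt_exp x).sub ((hasDerivAt_id x).const_mul (Real.exp 1))
        simp only [mul_one] at h; exact h
      have hSx : Sfun x ≠ 0 := ne_of_gt (hSpos x ⟨le_of_lt hx.1, hx.2⟩)
      have hd : HasDerivAt φ ((Real.exp x - Real.exp 1) / (2 * Real.sqrt (Sfun x)) + 1/2) x := by
        apply HasDerivAt.add (hS.sqrt hSx)
        simpa using (hasDerivAt_id x).div_const 2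
      exact hd.differentiableAt.differentiableWithinAt
    · intro x hx
      rw [interior_Icc] at hx
      have hS : HasDerivAt Sfun (Real.exp x - Real.exp 1) x := by
        have h := (Real.hasDerivAt_exp x).sub ((hasDerivAt_id x).const_mul (Real.exp 1))
        simp only [mul_one] at h; exact h
      have hSp : 0 < Sfun x := hSpos x ⟨le_of_lt hx.1, hx.2⟩
      have hSx : Sfun x ≠ 0 := ne_of_gt hSp
      have hd : HasDerivAt φ ((Real.exp x - Real.exp 1) / (2 * Real.sqrt (Sfun x)) + 1/2) x := by
        apply HasDerivAt.add (hS.sqrt hSx)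
        simpa using (hasDerivAt_id x).div_const 2
      rw [hd.deriv]
      have hsq : 0 < Real.sqrt (Sfun x) := Real.sqrt_pos.2 hSp
      have hkey := sqrt_Sfun_le (le_of_lt hx.1) (le_of_lt hx.2)
      rw [div_add' _ _ _ (by positivity), div_nonpos_iff]
      right
      constructor
      · nlinarith
      · positivity
  -- apply
  have hy'm : y' ∈ Set.Icc (0:ℝ) 1 := ⟨le_trans h0 h, h1⟩
  have hym : y ∈ Set.Icc (0:ℝ) 1 := ⟨h0, le_trans h h1⟩
  have ht' := Tfun_mem hy'm
  have ht := Tfun_mem hym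
  have horder : Tfun y' ≤ Tfun y := Tfun_anti hym hy'm h
  have := hanti ht' ht horder
  simp only [hφ] at this
  rw [Sfun_Tfun hym, Sfun_Tfun hy'm] at this
  linarith
section GfunSection

variable {a : ℝ}

-- breakpoint in u
noncomputable def u0 (a : ℝ) : ℝ := 1 - (1 - a) * Real.exp a
-- breakpoint in y
noncomputable def betaf (a : ℝ) : ℝ := Real.exp (1 - a) - Real.exp 1 * (1 - a)

lemma betaf_eq (a : ℝ) : betaf a = Sfun (1 - a) := by
  simp [betaf, Sfun]

lemma betaf_mem (ha : a ∈ Set.Icc (0:ℝ) 1) : betaf a ∈ Set.Icc (0:ℝ) 1 := by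
  rw [betaf_eq]; exact Sfun_mem ⟨by linarith [ha.2], by linarith [ha.1]⟩

lemma Tfun_betaf (ha : a ∈ Set.Icc (0:ℝ) 1) : Tfun (betaf a) = 1 - a := by
  rw [betaf_eq]; exact Tfun_Sfun ⟨by linarith [ha.2], by linarith [ha.1]⟩

-- the second branch
noncomputable def hbr (a u : ℝ) : ℝ :=
  Real.exp (Real.exp (-a) * (1 - u)) - (1 - u) * Real.exp (1 - a)

lemma hbr_hasDeriv (a u : ℝ) :
    HasDerivAt (hbr a) (-(Real.exp (-a) * Real.exp (Real.exp (-a) * (1 - u))) + Real.exp (1 - a)) u := by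
  unfold hbr
  have h1 : HasDerivAt (fun u : ℝ => Real.exp (-a) * (1 - u)) (-Real.exp (-a)) u := by
    simpa using ((hasDerivAt_const u (1:ℝ)).sub (hasDerivAt_id u)).const_mul (Real.exp (-a))
  have h2 : HasDerivAt (fun u : ℝ => Real.exp (Real.exp (-a) * (1 - u)))
      (Real.exp (Real.exp (-a) * (1 - u)) * (-Real.exp (-a))) u :=
    (Real.hasDerivAt_exp _).comp u h1
  have h3 : HasDerivAt (fun u : ℝ => (1 - u) * Real.exp (1 - a)) (-Real.exp (1-a)) u := by
    simpa using ((hasDerivAt_const u (1:ℝ)).sub (hasDerivAt_id u)).mul_const (Real.exp (1-a))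
  have := h2.sub h3
  exact this.congr_deriv (by ring)

lemma hbr_agree (a : ℝ) : hbr a (u0 a) = Real.exp (1 - a) * u0 a := by
  unfold hbr u0
  have h1 : (1 : ℝ) - (1 - (1-a) * Real.exp a) = (1-a) * Real.exp a := by ring
  rw [h1]
  have h2 : Real.exp (-a) * ((1-a) * Real.exp a) = 1 - a := by
    rw [← mul_assoc, mul_comm (Real.exp (-a)), mul_assoc, ← Real.exp_add]
    simp
  rw [h2]
  have h3 : Real.exp a * Real.exp (1 - a) = Real.exp 1 := by
    rw [← Real.exp_add]; ring_nf
  nlinarith [h3]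

lemma hbr_strictMono (ha : a ∈ Set.Icc (0: ℝ) 1) : StrictMonoOn (hbr a) (Set.Ici (u0 a)) := by
  apply strictMonoOn_of_deriv_pos (convex_Ici _)
  · have : Continuous (hbr a) := by unfold hbr; continuity
    exact this.continuousOn
  · intro x hx
    rw [interior_Ici] at hx
    rw [(hbr_hasDeriv a x).deriv]
    have key : Real.exp (-a) * (1 - x) < 1 - a := by
      have hx' : u0 a < x := hx
      have h1 : 1 - x < 1 - u0 a := by linarith
      have h2 : (1:ℝ) - u0 a = (1-a) * Real.exp a := by unfold u0; ring
      have h3 : Real.exp (-a) * (1 - x) < Real.exp (-a) * ((1-a) * Real.exp a) := by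
        apply mul_lt_mul_of_pos_left _ (Real.exp_pos _)
        rw [h2] at h1; exact h1
      have h4 : Real.exp (-a) * ((1-a) * Real.exp a) = 1 - a := by
        rw [← mul_assoc, mul_comm (Real.exp (-a)), mul_assoc, ← Real.exp_add]; simp
      linarith [h3, h4]
    have h5 : Real.exp (Real.exp (-a) * (1 - x)) < Real.exp (1 - a) := by
      apply Real.exp_lt_exp.2
      have : 1 - a ≤ 1 := by linarith [ha.1]
      linarith
    have h6 : Real.exp (-a) * Real.exp (Real.exp (-a) * (1-x)) < Real.exp (-a) * Real.exp (1 - a) := by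
      exact mul_lt_mul_of_pos_left h5 (Real.exp_pos _)
    have h7 : Real.exp (-a) * Real.exp (1 - a) = Real.exp (1 - 2*a) := by
      rw [← Real.exp_add]; ring_nf
    have h8 : Real.exp (1 - 2*a) ≤ Real.exp (1 - a) := by
      apply Real.exp_le_exp.2; linarith [ha.1]
    linarith
  
lemma Gfun_strictMono_s14 (ha : a ∈ Set.Icc (0:ℝ) 1) : StrictMono (Gfun a) := by
  intro x y hxy
  have hE : (0:ℝ) < Real.exp (1 - a) := Real.exp_pos _
  unfold Gfun
  by_cases hy : y ≤ 1 - (1 - a) * Real.exp a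
  · have hx : x ≤ 1 - (1-a) * Real.exp a := le_of_lt (lt_of_lt_of_le hxy hy)
    rw [if_pos hx, if_pos hy]
    exact (mul_lt_mul_iff_right₀ hE).2 hxy
  · rw [if_neg hy]
    push_neg at hy
    by_cases hx : x ≤ 1 - (1 - a) * Real.exp a
    · rw [if_pos hx]
      calc Real.exp (1-a) * x ≤ Real.exp (1-a) * u0 a := by
            apply mul_le_mul_of_nonneg_left _ (le_of_lt hE)
            exact hx
      _ = hbr a (u0 a) := (hbr_agree a).symm
      _ < hbr a y := hbr_strictMono ha (Set.mem_Ici.2 (le_refl _)) (Set.mem_Ici.2 (le_of_lt hy)) hy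
    · rw [if_neg hx]
      push_neg at hx
      exact hbr_strictMono ha (Set.mem_Ici.2 (le_of_lt hx)) (Set.mem_Ici.2 (le_of_lt (lt_trans hx hxy)))
        hxy

lemma Gfun_inj (ha : a ∈ Set.Icc (0:ℝ) 1) : Function.Injective (Gfun a) :=
  (Gfun_strictMono_s14 ha).injective

lemma Ginv_Gfun_s14 (ha : a ∈ Set.Icc (0:ℝ) 1) (x : ℝ) : Ginv a (Gfun a x) = x :=
  Function.leftInverse_invFun (Gfun_inj ha) x

-- identity: exp (a-1) * betaf a = u0 a
lemma exp_betaf (a : ℝ) : Real.exp (a - 1) * betaf a = u0 a := by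
  unfold betaf u0
  have h1 : Real.exp (a-1) * Real.exp (1-a) = 1 := by rw [← Real.exp_add]; simp
  have h2 : Real.exp (a-1) * Real.exp 1 = Real.exp a := by rw [← Real.exp_add]; ring_nf
  linear_combination h1 - (1-a) * h2

-- R1 : for 0 ≤ y ≤ β(a), Gfun a (e^{a-1} y) = y
lemma Gfun_p (ha : a ∈ Set.Icc (0:ℝ) 1) {y : ℝ} (h0 : 0 ≤ y) (hy : y ≤ betaf a) :
    Gfun a (Real.exp (a-1) * y) = y := by
  have hle : Real.exp (a-1) * y ≤ 1 - (1 - a) * Real.exp a := by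
    have := mul_le_mul_of_nonneg_left hy (le_of_lt (Real.exp_pos (a-1)))
    rw [exp_betaf a] at this
    unfold u0 at this
    linarith
  unfold Gfun
  rw [if_pos hle, ← mul_assoc, ← Real.exp_add]
  simp

-- R2 : for β(a) ≤ y ≤ 1, Gfun a (1 - e^a * T y) = y
lemma Gfun_q (ha : a ∈ Set.Icc (0:ℝ) 1) {y : ℝ} (hy : betaf a ≤ y) (h1 : y ≤ 1) :
    Gfun a (1 - Real.exp a * Tfun y) = y := by
  have hymem : y ∈ Set.Icc (0:ℝ) 1 := ⟨le_trans (betaf_mem ha).1 hy, h1⟩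
  set t := Tfun y with hts
  have htmem : t ∈ Set.Icc (0:ℝ) 1 := Tfun_mem hymem
  have hta : t ≤ 1 - a := by
    have := Tfun_anti (betaf_mem ha) hymem hy
    rw [Tfun_betaf ha] at this; linarith
  have hSt : Sfun t = y := Sfun_Tfun hymem
  rcases eq_or_lt_of_le hta with heq | hlt
  · -- t = 1 - a : the point is exactly u0 a, branch 1
    have hu : 1 - Real.exp a * t = u0 a := by rw [heq]; unfold u0; ring
    have hcond : 1 - Real.exp a * t ≤ 1 - (1-a) * Real.exp a := by
      rw [hu]; unfold u0; ring_nf; rfl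
    unfold Gfun
    rw [if_pos hcond, hu]
    -- e^{1-a} * u0 a = betaf a = S(1-a) = S t = y
    have : Real.exp (1-a) * u0 a = betaf a := by
      have := exp_betaf a
      have h1 : Real.exp (1-a) * Real.exp (a-1) = 1 := by rw [← Real.exp_add]; simp
      linear_combination betaf a * h1 - Real.exp (1-a) * this
    rw [this, betaf_eq, ← heq, hSt]
  · -- t < 1 - a : branch 2
    have hcond : ¬ (1 - Real.exp a * t ≤ 1 - (1-a) * Real.exp a) := by
      push_neg
      have : Real.exp a * t < Real.exp a * (1 - a) := by
        exact mul_lt_mul_of_pos_left hlt (Real.exp_pos a)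
      nlinarith [this]
    unfold Gfun
    rw [if_neg hcond]
    have h2 : (1:ℝ) - (1 - Real.exp a * t) = Real.exp a * t := by ring
    rw [h2]
    have h3 : Real.exp (-a) * (Real.exp a * t) = t := by
      rw [← mul_assoc, ← Real.exp_add]; simp
    rw [h3]
    have h4 : Real.exp a * t * Real.exp (1 - a) = Real.exp 1 * t := by
      rw [mul_comm (Real.exp a) t, mul_assoc, ← Real.exp_add]; ring_nf
    rw [h4, ← hSt]
    simp [Sfun]

end GfunSection
noncomputable def Gi (a y : ℝ) : ℝ :=
  max (Real.exp (a-1) * y) (1 - Real.exp a * Tfun y)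

section GiSection

variable {a y : ℝ}

-- q ≤ p when y ≤ β
lemma q_le_p (ha : a ∈ Set.Icc (0:ℝ) 1) (h0 : 0 ≤ y) (hy : y ≤ betaf a) :
    1 - Real.exp a * Tfun y ≤ Real.exp (a-1) * y := by
  have hymem : y ∈ Set.Icc (0:ℝ) 1 := ⟨h0, le_trans hy (betaf_mem ha).2⟩
  set t := Tfun y with hts
  have htmem : t ∈ Set.Icc (0:ℝ) 1 := Tfun_mem hymem
  have hta : 1 - a ≤ t := by
    have := Tfun_anti hymem (betaf_mem ha) hy
    rw [Tfun_betaf ha] at this; linarith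
  have hSt : Sfun t = y := Sfun_Tfun hymem
  -- Gfun a (1 - e^a t) ≤ y = Gfun a (e^{a-1} y)
  have hqu : 1 - Real.exp a * t ≤ 1 - (1-a) * Real.exp a := by
    have : Real.exp a * (1 - a) ≤ Real.exp a * t := mul_le_mul_of_nonneg_left hta (le_of_lt (Real.exp_pos a))
    nlinarith [this]
  have hGq : Gfun a (1 - Real.exp a * t) = Real.exp (1-a) - Real.exp 1 * t := by
    unfold Gfun
    rw [if_pos hqu]
    have h1 : Real.exp (1-a) * Real.exp a = Real.exp 1 := by rw [← Real.exp_add]; ring_nf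
    linear_combination (-t) * h1
  have hGle : Gfun a (1 - Real.exp a * t) ≤ y := by
    rw [hGq, ← hSt]
    unfold Sfun
    have : Real.exp (1-a) ≤ Real.exp t := Real.exp_le_exp.2 (by linarith)
    linarith
  have hGp : Gfun a (Real.exp (a-1) * y) = y := Gfun_p ha h0 hy
  have hmm : Gfun a (1 - Real.exp a * t) ≤ Gfun a (Real.exp (a-1) * y) := by
    rw [hGp]; exact hGle
  exact (Gfun_strictMono_s14 ha).le_iff_le.1 hmm

-- p ≤ q when β ≤ y ≤ 1
lemma p_le_q (ha : a ∈ Set.Icc (0:ℝ) 1) (hy : betaf a ≤ y) (h1 : y ≤ 1) :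
    Real.exp (a-1) * y ≤ 1 - Real.exp a * Tfun y := by
  have h0 : (0:ℝ) ≤ y := le_trans (betaf_mem ha).1 hy
  have hGq : Gfun a (1 - Real.exp a * Tfun y) = y := Gfun_q ha hy h1
  apply (Gfun_strictMono_s14 ha).le_iff_le.1
  rw [hGq]
  -- show Gfun a (e^{a-1} y) ≤ y
  set p := Real.exp (a-1) * y with hps
  by_cases hc : p ≤ 1 - (1-a) * Real.exp a
  · unfold Gfun
    rw [if_pos hc, hps, ← mul_assoc, ← Real.exp_add]
    simp
  · push_neg at hc
    unfold Gfun
    rw [if_neg (not_le.2 hc)]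
    -- branch 2 value ≤ e^{1-a} p = y
    have key : Real.exp (-a) * (1 - p) ≤ 1 - a := by
      have h2 : 1 - p ≤ (1-a) * Real.exp a := by linarith
      have h3 : Real.exp (-a) * (1 - p) ≤ Real.exp (-a) * ((1-a) * Real.exp a) :=
        mul_le_mul_of_nonneg_left h2 (le_of_lt (Real.exp_pos _))
      have h4 : Real.exp (-a) * ((1-a) * Real.exp a) = 1 - a := by
        rw [← mul_assoc, mul_comm (Real.exp (-a)), mul_assoc, ← Real.exp_add]; simp
      linarith
    have h5 : Real.exp (Real.exp (-a) * (1 - p)) ≤ Real.exp (1-a) := Real.exp_le_exp.2 (by linarith)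
    have h6 : Real.exp (1-a) * p = y := by
      rw [hps, ← mul_assoc, ← Real.exp_add]; simp
    nlinarith [h5, h6]

lemma Ginv_eq_Gi (ha : a ∈ Set.Icc (0:ℝ) 1) (hy : y ∈ Set.Icc (0:ℝ) 1) :
    Ginv a y = Gi a y := by
  unfold Gi
  rcases le_total y (betaf a) with h | h
  · rw [max_eq_left (q_le_p ha hy.1 h)]
    conv_lhs => rw [← Gfun_p ha hy.1 h]
    exact Ginv_Gfun_s14 ha _
  · rw [max_eq_right (p_le_q ha h hy.2)]
    conv_lhs => rw [← Gfun_q ha h hy.2]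
    exact Ginv_Gfun_s14 ha _

-- region forms for Gi
lemma Gi_eq_p (ha : a ∈ Set.Icc (0:ℝ) 1) (h0 : 0 ≤ y) (hy : y ≤ betaf a) :
    Gi a y = Real.exp (a-1) * y := max_eq_left (q_le_p ha h0 hy)

lemma Gi_eq_q (ha : a ∈ Set.Icc (0:ℝ) 1) (hy : betaf a ≤ y) (h1 : y ≤ 1) :
    Gi a y = 1 - Real.exp a * Tfun y := max_eq_right (p_le_q ha hy h1)

-- monotone in y
lemma Gi_mono (ha : a ∈ Set.Icc (0:ℝ) 1) {y y' : ℝ} (hy : y ∈ Set.Icc (0:ℝ) 1)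
    (hy' : y' ∈ Set.Icc (0:ℝ) 1) (h : y ≤ y') : Gi a y ≤ Gi a y' := by
  unfold Gi
  apply max_le_max
  · exact mul_le_mul_of_nonneg_left h (le_of_lt (Real.exp_pos _))
  · have := Tfun_anti hy hy' h
    nlinarith [mul_le_mul_of_nonneg_left this (le_of_lt (Real.exp_pos a))]

-- gap bound: Gi a y' - Gi a y ≤ 6 (√y' - √y)
lemma Gi_gap (ha : a ∈ Set.Icc (0:ℝ) 1) {y y' : ℝ} (h0 : 0 ≤ y) (h : y ≤ y') (h1 : y' ≤ 1) :
    Gi a y' - Gi a y ≤ 6 * (Real.sqrt y' - Real.sqrt y) := by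
  have hsum : Real.sqrt y + Real.sqrt y' ≤ 2 := by
    have h1' : Real.sqrt y ≤ 1 := Real.sqrt_le_one.mpr (by linarith)
    have h2' : Real.sqrt y' ≤ 1 := Real.sqrt_le_one.mpr h1
    linarith
  have hyy : y' - y ≤ 2 * (Real.sqrt y' - Real.sqrt y) := by
    have hy2 : Real.sqrt y ^ 2 = y := Real.sq_sqrt h0
    have hy'2 : Real.sqrt y' ^ 2 = y' := Real.sq_sqrt (le_trans h0 h)
    nlinarith [Real.sqrt_nonneg y, Real.sqrt_nonneg y',
      Real.sqrt_le_sqrt h]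
  have hT : Tfun y - Tfun y' ≤ 2 * (Real.sqrt y' - Real.sqrt y) := Tfun_sqrt_lip h0 h h1
  have hp : Real.exp (a-1) * y' - Real.exp (a-1) * y ≤ 2 * (Real.sqrt y' - Real.sqrt y) := by
    have hE : Real.exp (a-1) ≤ 1 := Real.exp_le_one_iff.mpr (by linarith [ha.2])
    have : Real.exp (a-1) * (y' - y) ≤ 1 * (y' - y) :=
      mul_le_mul_of_nonneg_right hE (by linarith)
    nlinarith [this]
  have hq : (1 - Real.exp a * Tfun y') - (1 - Real.exp a * Tfun y) ≤ 6 * (Real.sqrt y' - Real.sqrt y) := by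
    have hE : Real.exp a ≤ 3 := by
      calc Real.exp a ≤ Real.exp 1 := Real.exp_le_exp.2 ha.2
      _ ≤ 3 := by linarith [e_lt]
    have h2 : Real.exp a * (Tfun y - Tfun y') ≤ 3 * (2 * (Real.sqrt y' - Real.sqrt y)) := by
      rcases le_or_gt 0 (Tfun y - Tfun y') with hd | hd
      · calc Real.exp a * (Tfun y - Tfun y') ≤ 3 * (Tfun y - Tfun y') := by
              exact mul_le_mul_of_nonneg_right hE hd
        _ ≤ 3 * (2 * (Real.sqrt y' - Real.sqrt y)) := by nlinarith [hT]
      · have hpos : 0 ≤ Real.sqrt y' - Real.sqrt y := by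
          have := Real.sqrt_le_sqrt h; linarith
        nlinarith [Real.exp_pos a]
    nlinarith [h2]
  have hmax : Gi a y' ≤ Gi a y + max (Real.exp (a-1) * y' - Real.exp (a-1) * y)
      ((1 - Real.exp a * Tfun y') - (1 - Real.exp a * Tfun y)) := by
    unfold Gi
    apply max_le
    · calc Real.exp (a-1) * y' = Real.exp (a-1) * y + (Real.exp (a-1) * y' - Real.exp (a-1) * y) := by ring
      _ ≤ _ := add_le_add (le_max_left _ _) (le_max_left _ _)
    · calc (1 - Real.exp a * Tfun y') = (1 - Real.exp a * Tfun y) + ((1 - Real.exp a * Tfun y') - (1 - Real.exp a * Tfun y)) := by ring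
      _ ≤ _ := add_le_add (le_max_right _ _) (le_max_right _ _)
  have : max (Real.exp (a-1) * y' - Real.exp (a-1) * y)
      ((1 - Real.exp a * Tfun y') - (1 - Real.exp a * Tfun y)) ≤ 6 * (Real.sqrt y' - Real.sqrt y) := by
    apply max_le
    · have hpos : 0 ≤ Real.sqrt y' - Real.sqrt y := by
        have := Real.sqrt_le_sqrt h; linarith
      linarith [hp]
    · exact hq
  linarith [hmax, this]

lemma Gi_cont (y : ℝ) : Continuous (fun a => Gi a y) := by
  unfold Gi
  apply Continuous.max
  · continuity
  · continuity

end GiSection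
section TVSection

noncomputable def Mmaj (a a' y : ℝ) : ℝ :=
  (Real.exp (a'-1) - Real.exp (a-1)) * y
  + Real.exp (a'-1) * min (max y (betaf a)) (betaf a')
  + (Real.exp a' - Real.exp a) * (1 - Tfun (max y (betaf a')))
  + Real.exp a * (Tfun (betaf a) - Tfun (min (max y (betaf a)) (betaf a')))

variable {a a' y y' : ℝ}

lemma betaf_le_betaf (ha : a ∈ Set.Icc (0:ℝ) 1) (ha' : a' ∈ Set.Icc (0:ℝ) 1) (haa : a ≤ a') :
    betaf a ≤ betaf a' := by
  rw [betaf_eq, betaf_eq]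
  rcases eq_or_lt_of_le haa with h | h
  · rw [h]
  · exact le_of_lt (Sfun_anti ⟨by linarith [ha'.2], by linarith [ha'.1]⟩
      ⟨by linarith [ha.2], by linarith [ha.1]⟩ (by linarith))

-- monotonicity of Mmaj on [0,1]
lemma Mmaj_mono (ha : a ∈ Set.Icc (0:ℝ) 1) (ha' : a' ∈ Set.Icc (0:ℝ) 1) (haa : a ≤ a')
    (hy : y ∈ Set.Icc (0:ℝ) 1) (hy' : y' ∈ Set.Icc (0:ℝ) 1) (h : y ≤ y') :
    Mmaj a a' y ≤ Mmaj a a' y' := by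
  have hβ := betaf_mem ha
  have hβ' := betaf_mem ha'
  have hββ := betaf_le_betaf ha ha' haa
  have hEc : Real.exp (a-1) ≤ Real.exp (a'-1) := Real.exp_le_exp.2 (by linarith)
  have hEc2 : Real.exp a ≤ Real.exp a' := Real.exp_le_exp.2 haa
  unfold Mmaj
  have t1 : (Real.exp (a'-1) - Real.exp (a-1)) * y ≤ (Real.exp (a'-1) - Real.exp (a-1)) * y' :=
    mul_le_mul_of_nonneg_left h (by linarith)
  have t2 : Real.exp (a'-1) * min (max y (betaf a)) (betaf a')
      ≤ Real.exp (a'-1) * min (max y' (betaf a)) (betaf a') := by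
    apply mul_le_mul_of_nonneg_left _ (le_of_lt (Real.exp_pos _))
    exact min_le_min (max_le_max h (le_refl _)) (le_refl _)
  have hmax_mem : ∀ z : ℝ, z ∈ Set.Icc (0:ℝ) 1 → max z (betaf a') ∈ Set.Icc (0:ℝ) 1 :=
    fun z hz => ⟨le_trans hz.1 (le_max_left _ _), max_le hz.2 hβ'.2⟩
  have hclamp_mem : ∀ z : ℝ, z ∈ Set.Icc (0:ℝ) 1 → min (max z (betaf a)) (betaf a') ∈ Set.Icc (0:ℝ) 1 := by
    intro z hz
    constructor
    · exact le_min (le_trans hz.1 (le_max_left _ _)) hβ'.1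
    · exact le_trans (min_le_right _ _) hβ'.2
  have t3 : (Real.exp a' - Real.exp a) * (1 - Tfun (max y (betaf a')))
      ≤ (Real.exp a' - Real.exp a) * (1 - Tfun (max y' (betaf a'))) := by
    apply mul_le_mul_of_nonneg_left _ (by linarith)
    have := Tfun_anti (hmax_mem y hy) (hmax_mem y' hy') (max_le_max h (le_refl _))
    linarith
  have t4 : Real.exp a * (Tfun (betaf a) - Tfun (min (max y (betaf a)) (betaf a')))
      ≤ Real.exp a * (Tfun (betaf a) - Tfun (min (max y' (betaf a)) (betaf a'))) := by
    apply mul_le_mul_of_nonneg_left _ (le_of_lt (Real.exp_pos _))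
    have := Tfun_anti (hclamp_mem y hy) (hclamp_mem y' hy')
      (min_le_min (max_le_max h (le_refl _)) (le_refl _))
    linarith
  linarith

-- atom 1 : y ≤ y' ≤ betaf a
lemma atom1 (ha : a ∈ Set.Icc (0:ℝ) 1) (ha' : a' ∈ Set.Icc (0:ℝ) 1) (haa : a ≤ a')
    (h0 : 0 ≤ y) (h : y ≤ y') (hb : y' ≤ betaf a) :
    |(Gi a' y' - Gi a y') - (Gi a' y - Gi a y)| ≤ Mmaj a a' y' - Mmaj a a' y := by
  have hβ := betaf_mem ha
  have hββ := betaf_le_betaf ha ha' haa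
  have e1 : Gi a y = Real.exp (a-1) * y := Gi_eq_p ha h0 (le_trans h hb)
  have e2 : Gi a y' = Real.exp (a-1) * y' := Gi_eq_p ha (le_trans h0 h) hb
  have e3 : Gi a' y = Real.exp (a'-1) * y := Gi_eq_p ha' h0 (le_trans (le_trans h hb) hββ)
  have e4 : Gi a' y' = Real.exp (a'-1) * y' := Gi_eq_p ha' (le_trans h0 h) (le_trans hb hββ)
  rw [e1, e2, e3, e4]
  have hEc : Real.exp (a-1) ≤ Real.exp (a'-1) := Real.exp_le_exp.2 (by linarith)
  have habs : |(Real.exp (a'-1) * y' - Real.exp (a-1) * y') - (Real.exp (a'-1) * y - Real.exp (a-1) * y)|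
      = (Real.exp (a'-1) - Real.exp (a-1)) * (y' - y) := by
    rw [abs_of_nonneg]
    · ring
    · nlinarith
  rw [habs]
  unfold Mmaj
  have c1 : min (max y (betaf a)) (betaf a') = betaf a := by
    rw [max_eq_right (le_trans h hb), min_eq_left hββ]
  have c2 : min (max y' (betaf a)) (betaf a') = betaf a := by
    rw [max_eq_right hb, min_eq_left hββ]
  have c3 : max y (betaf a') = betaf a' := max_eq_right (le_trans (le_trans h hb) hββ)
  have c4 : max y' (betaf a') = betaf a' := max_eq_right (le_trans hb hββ)
  rw [c1, c2, c3, c4]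
  ring_nf
  nlinarith [hEc]

-- atom 2 : betaf a ≤ y ≤ y' ≤ betaf a'
lemma atom2 (ha : a ∈ Set.Icc (0:ℝ) 1) (ha' : a' ∈ Set.Icc (0:ℝ) 1) (haa : a ≤ a')
    (hb : betaf a ≤ y) (h : y ≤ y') (hb' : y' ≤ betaf a') (h1 : y' ≤ 1) :
    |(Gi a' y' - Gi a y') - (Gi a' y - Gi a y)| ≤ Mmaj a a' y' - Mmaj a a' y := by
  have hβ := betaf_mem ha
  have hβ' := betaf_mem ha'
  have h0 : (0:ℝ) ≤ y := le_trans hβ.1 hb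
  have hymem : y ∈ Set.Icc (0:ℝ) 1 := ⟨h0, le_trans h h1⟩
  have hy'mem : y' ∈ Set.Icc (0:ℝ) 1 := ⟨le_trans h0 h, h1⟩
  have e1 : Gi a y = 1 - Real.exp a * Tfun y := Gi_eq_q ha hb (le_trans h h1)
  have e2 : Gi a y' = 1 - Real.exp a * Tfun y' := Gi_eq_q ha (le_trans hb h) h1
  have e3 : Gi a' y = Real.exp (a'-1) * y := Gi_eq_p ha' h0 (le_trans h hb')
  have e4 : Gi a' y' = Real.exp (a'-1) * y' := Gi_eq_p ha' (le_trans h0 h) hb'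
  rw [e1, e2, e3, e4]
  have hT : Tfun y' ≤ Tfun y := Tfun_anti hymem hy'mem h
  unfold Mmaj
  have c1 : min (max y (betaf a)) (betaf a') = y := by
    rw [max_eq_left hb, min_eq_left (le_trans h hb')]
  have c2 : min (max y' (betaf a)) (betaf a') = y' := by
    rw [max_eq_left (le_trans hb h), min_eq_left hb']
  have c3 : max y (betaf a') = betaf a' := max_eq_right (le_trans h hb')
  have c4 : max y' (betaf a') = betaf a' := max_eq_right hb'
  rw [c1, c2, c3, c4]
  have hEp : (0:ℝ) < Real.exp (a'-1) := Real.exp_pos _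
  have hEa : (0:ℝ) < Real.exp a := Real.exp_pos _
  have hEc : Real.exp (a-1) ≤ Real.exp (a'-1) := Real.exp_le_exp.2 (by linarith)
  have hp1 : Real.exp (a'-1) * y ≤ Real.exp (a'-1) * y' := mul_le_mul_of_nonneg_left h (le_of_lt hEp)
  have hp2 : Real.exp a * Tfun y' ≤ Real.exp a * Tfun y := mul_le_mul_of_nonneg_left hT (le_of_lt hEa)
  have hc1 : 0 ≤ (Real.exp (a'-1) - Real.exp (a-1)) * (y' - y) := mul_nonneg (by linarith) (by linarith)
  rw [abs_le]
  constructor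
  · nlinarith
  · nlinarith

-- atom 3 : betaf a' ≤ y ≤ y' ≤ 1
lemma atom3 (ha : a ∈ Set.Icc (0:ℝ) 1) (ha' : a' ∈ Set.Icc (0:ℝ) 1) (haa : a ≤ a')
    (hb : betaf a' ≤ y) (h : y ≤ y') (h1 : y' ≤ 1) :
    |(Gi a' y' - Gi a y') - (Gi a' y - Gi a y)| ≤ Mmaj a a' y' - Mmaj a a' y := by
  have hβ := betaf_mem ha
  have hβ' := betaf_mem ha'
  have hββ := betaf_le_betaf ha ha' haa
  have h0 : (0:ℝ) ≤ y := le_trans hβ'.1 hb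
  have hymem : y ∈ Set.Icc (0:ℝ) 1 := ⟨h0, le_trans h h1⟩
  have hy'mem : y' ∈ Set.Icc (0:ℝ) 1 := ⟨le_trans h0 h, h1⟩
  have e1 : Gi a y = 1 - Real.exp a * Tfun y := Gi_eq_q ha (le_trans hββ hb) (le_trans h h1)
  have e2 : Gi a y' = 1 - Real.exp a * Tfun y' := Gi_eq_q ha (le_trans hββ (le_trans hb h)) h1
  have e3 : Gi a' y = 1 - Real.exp a' * Tfun y := Gi_eq_q ha' hb (le_trans h h1)
  have e4 : Gi a' y' = 1 - Real.exp a' * Tfun y' := Gi_eq_q ha' (le_trans hb h) h1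
  rw [e1, e2, e3, e4]
  have hT : Tfun y' ≤ Tfun y := Tfun_anti hymem hy'mem h
  have hEc2 : Real.exp a ≤ Real.exp a' := Real.exp_le_exp.2 haa
  unfold Mmaj
  have c1 : min (max y (betaf a)) (betaf a') = betaf a' := by
    rw [max_eq_left (le_trans hββ hb), min_eq_right hb]
  have c2 : min (max y' (betaf a)) (betaf a') = betaf a' := by
    rw [max_eq_left (le_trans hββ (le_trans hb h)), min_eq_right (le_trans hb h)]
  have c3 : max y (betaf a') = y := max_eq_left hb
  have c4 : max y' (betaf a') = y' := max_eq_left (le_trans hb h)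
  rw [c1, c2, c3, c4]
  have habs : |(1 - Real.exp a' * Tfun y' - (1 - Real.exp a * Tfun y')) - (1 - Real.exp a' * Tfun y - (1 - Real.exp a * Tfun y))|
      = (Real.exp a' - Real.exp a) * (Tfun y - Tfun y') := by
    rw [abs_of_nonneg]
    · ring
    · nlinarith
  rw [habs]
  have hEc : Real.exp (a-1) ≤ Real.exp (a'-1) := Real.exp_le_exp.2 (by linarith)
  have hc1 : 0 ≤ (Real.exp (a'-1) - Real.exp (a-1)) * (y' - y) := mul_nonneg (by linarith) (by linarith)
  nlinarith

-- the key step lemma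
lemma key_step (ha : a ∈ Set.Icc (0:ℝ) 1) (ha' : a' ∈ Set.Icc (0:ℝ) 1) (haa : a ≤ a')
    (h0 : 0 ≤ y) (h : y ≤ y') (h1 : y' ≤ 1) :
    |(Gi a' y' - Gi a y') - (Gi a' y - Gi a y)| ≤ Mmaj a a' y' - Mmaj a a' y := by
  have hβ := betaf_mem ha
  have hβ' := betaf_mem ha'
  have hββ := betaf_le_betaf ha ha' haa
  rcases le_total y' (betaf a) with hA | hA
  · exact atom1 ha ha' haa h0 h hA
  · rcases le_total (betaf a') y with hB | hB
    · exact atom3 ha ha' haa hB h h1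
    · rcases le_total y (betaf a) with hC | hC
      · rcases le_total y' (betaf a') with hD | hD
        · -- y ≤ β ≤ y' ≤ β' : split at β
          have s1 := atom1 ha ha' haa h0 hC (le_refl _)
          have s2 := atom2 ha ha' haa (le_refl _) hA hD h1
          calc |(Gi a' y' - Gi a y') - (Gi a' y - Gi a y)|
              ≤ |(Gi a' y' - Gi a y') - (Gi a' (betaf a) - Gi a (betaf a))|
                + |(Gi a' (betaf a) - Gi a (betaf a)) - (Gi a' y - Gi a y)| := by
                apply abs_sub_le
          _ ≤ (Mmaj a a' y' - Mmaj a a' (betaf a)) + (Mmaj a a' (betaf a) - Mmaj a a' y) :=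
                add_le_add s2 s1
          _ = Mmaj a a' y' - Mmaj a a' y := by ring
        · -- y ≤ β ≤ β' ≤ y' : split at β and β'
          have s1 := atom1 ha ha' haa h0 hC (le_refl _)
          have s2 := atom2 ha ha' haa (le_refl _) hββ (le_refl _) hβ'.2
          have s3 := atom3 ha ha' haa (le_refl _) hD h1
          calc |(Gi a' y' - Gi a y') - (Gi a' y - Gi a y)|
              ≤ |(Gi a' y' - Gi a y') - (Gi a' (betaf a') - Gi a (betaf a'))|
                + |(Gi a' (betaf a') - Gi a (betaf a')) - (Gi a' y - Gi a y)| := abs_sub_le _ _ _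
          _ ≤ (Mmaj a a' y' - Mmaj a a' (betaf a'))
                + |(Gi a' (betaf a') - Gi a (betaf a')) - (Gi a' y - Gi a y)| := by
                exact add_le_add_left s3 _
          _ ≤ (Mmaj a a' y' - Mmaj a a' (betaf a'))
                + (|(Gi a' (betaf a') - Gi a (betaf a')) - (Gi a' (betaf a) - Gi a (betaf a))|
                  + |(Gi a' (betaf a) - Gi a (betaf a)) - (Gi a' y - Gi a y)|) := by
                exact add_le_add_right (abs_sub_le _ _ _) _
          _ ≤ (Mmaj a a' y' - Mmaj a a' (betaf a'))
                + ((Mmaj a a' (betaf a') - Mmaj a a' (betaf a)) + (Mmaj a a' (betaf a) - Mmaj a a' y)) :=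
                add_le_add_right (add_le_add s2 s1) _
          _ = Mmaj a a' y' - Mmaj a a' y := by ring
      · rcases le_total y' (betaf a') with hD | hD
        · exact atom2 ha ha' haa hC h hD h1
        · -- β ≤ y ≤ β' ≤ y' : split at β'
          have s2 := atom2 ha ha' haa hC hB (le_refl _) hβ'.2
          have s3 := atom3 ha ha' haa (le_refl _) hD h1
          calc |(Gi a' y' - Gi a y') - (Gi a' y - Gi a y)|
              ≤ |(Gi a' y' - Gi a y') - (Gi a' (betaf a') - Gi a (betaf a'))|
                + |(Gi a' (betaf a') - Gi a (betaf a')) - (Gi a' y - Gi a y)| := abs_sub_le _ _ _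
          _ ≤ (Mmaj a a' y' - Mmaj a a' (betaf a')) + (Mmaj a a' (betaf a') - Mmaj a a' y) :=
                add_le_add s3 s2
          _ = Mmaj a a' y' - Mmaj a a' y := by ring

-- total bound
lemma Mmaj_total (ha : a ∈ Set.Icc (0:ℝ) 1) (ha' : a' ∈ Set.Icc (0:ℝ) 1) (haa : a ≤ a') :
    Mmaj a a' 1 - Mmaj a a' 0 ≤ 10 * (a' - a) := by
  have hβ := betaf_mem ha
  have hβ' := betaf_mem ha'
  have hββ := betaf_le_betaf ha ha' haa
  have hE3 : Real.exp a' ≤ 3 := by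
    calc Real.exp a' ≤ Real.exp 1 := Real.exp_le_exp.2 ha'.2
    _ ≤ 3 := by linarith [e_lt]
  have hEp1 : Real.exp (a'-1) ≤ 1 := Real.exp_le_one_iff.mpr (by linarith [ha'.2])
  -- clamp values
  have c1 : min (max (0:ℝ) (betaf a)) (betaf a') = betaf a := by
    rw [max_eq_right hβ.1, min_eq_left hββ]
  have c2 : min (max (1:ℝ) (betaf a)) (betaf a') = betaf a' := by
    rw [max_eq_left hβ.2, min_eq_right hβ'.2]
  have c3 : max (0:ℝ) (betaf a') = betaf a' := max_eq_right hβ'.1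
  have c4 : max (1:ℝ) (betaf a') = 1 := max_eq_left hβ'.2
  unfold Mmaj
  rw [c1, c2, c3, c4, Tfun_one, Tfun_betaf ha, Tfun_betaf ha']
  -- exp increments
  have inc1 : Real.exp (a'-1) - Real.exp (a-1) ≤ a' - a := by
    have h := Real.add_one_le_exp (-(a'-a))
    have : (1 - (a'-a)) * Real.exp (a'-1) ≤ Real.exp (a-1) := by
      have h2 : Real.exp (a-1) = Real.exp (-(a'-a)) * Real.exp (a'-1) := by
        rw [← Real.exp_add]; ring_nf
      rw [h2]
      apply mul_le_mul_of_nonneg_right _ (le_of_lt (Real.exp_pos _))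
      linarith
    nlinarith [Real.exp_pos (a'-1), hEp1]
  have inc2 : Real.exp a' - Real.exp a ≤ 3 * (a' - a) := by
    have h := Real.add_one_le_exp (-(a'-a))
    have : (1 - (a'-a)) * Real.exp a' ≤ Real.exp a := by
      have h2 : Real.exp a = Real.exp (-(a'-a)) * Real.exp a' := by
        rw [← Real.exp_add]; ring_nf
      rw [h2]
      apply mul_le_mul_of_nonneg_right _ (le_of_lt (Real.exp_pos _))
      linarith
    nlinarith [Real.exp_pos a']
  have incβ : betaf a' - betaf a ≤ 3 * (a' - a) := by
    unfold betaf
    have h1 : Real.exp (1-a') ≤ Real.exp (1-a) := Real.exp_le_exp.2 (by linarith)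
    have h2 : Real.exp 1 ≤ 3 := by linarith [e_lt]
    nlinarith [h1, h2]
  have hT1 : (1:ℝ) - a' ≤ 1 := by linarith [ha'.1]
  have hT0 : (0:ℝ) ≤ 1 - a' := by linarith [ha'.2]
  have hEa3 : Real.exp a ≤ 3 := by
    calc Real.exp a ≤ Real.exp a' := Real.exp_le_exp.2 haa
    _ ≤ 3 := hE3
  nlinarith [mul_le_mul_of_nonneg_left incβ (le_of_lt (Real.exp_pos (a'-1))),
    Real.exp_pos (a'-1), Real.exp_pos a, mul_le_mul_of_nonneg_right inc2 hT0]

end TVSection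
section MatrixSection

variable {n : ℕ}

lemma npos (hn : 1 ≤ n) : (0:ℝ) < n := by exact_mod_cast Nat.pos_of_ne_zero (by omega)

lemma grid_mem (hn : 1 ≤ n) (i : Fin n) :
    ((i.val:ℝ)/n) ∈ Set.Icc (0:ℝ) 1 ∧ (((i.val:ℝ)+1)/n) ∈ Set.Icc (0:ℝ) 1 := by
  have hnp := npos hn
  have hi : (i.val:ℝ) + 1 ≤ n := by exact_mod_cast i.isLt
  refine ⟨⟨by positivity, ?_⟩, ⟨by positivity, ?_⟩⟩
  · rw [div_le_one hnp]; linarith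
  · rw [div_le_one hnp]; exact hi

lemma grid_le (hn : 1 ≤ n) (i : Fin n) : ((i.val:ℝ)/n) ≤ (((i.val:ℝ)+1)/n) := by
  have hnp := npos hn
  exact (div_le_div_iff_of_pos_right hnp).2 (by linarith)

lemma Bmat_eq (hn : 1 ≤ n) (i j : Fin n) :
    Bmat n i j = n * ∫ a in ((i.val:ℝ)/n)..(((i.val:ℝ)+1)/n),
      (Gi a (((j.val:ℝ)+1)/n) - Gi a ((j.val:ℝ)/n)) := by
  unfold Bmat
  congr 1
  apply intervalIntegral.integral_congr
  intro a ha
  rw [Set.uIcc_of_le (grid_le hn i)] at ha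
  dsimp only
  have ha01 : a ∈ Set.Icc (0:ℝ) 1 :=
    ⟨le_trans ((grid_mem hn i).1).1 ha.1, le_trans ha.2 ((grid_mem hn i).2).2⟩
  rw [Ginv_eq_Gi ha01 (grid_mem hn j).2, Ginv_eq_Gi ha01 (grid_mem hn j).1]

lemma Bmat_nonneg (hn : 1 ≤ n) (i j : Fin n) : 0 ≤ Bmat n i j := by
  rw [Bmat_eq hn i j]
  have hnp := npos hn
  apply mul_nonneg (le_of_lt hnp)
  apply intervalIntegral.integral_nonneg (grid_le hn i)
  intro a ha
  have ha01 : a ∈ Set.Icc (0:ℝ) 1 :=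
    ⟨le_trans ((grid_mem hn i).1).1 ha.1, le_trans ha.2 ((grid_mem hn i).2).2⟩
  have := Gi_mono ha01 (grid_mem hn j).1 (grid_mem hn j).2
    ((div_le_div_iff_of_pos_right hnp).2 (by linarith))
  linarith

lemma Bmat_le (hn : 1 ≤ n) (i j : Fin n) :
    Bmat n i j ≤ 6 * (Real.sqrt (((j.val:ℝ)+1)/n) - Real.sqrt ((j.val:ℝ)/n)) := by
  have hnp := npos hn
  rw [Bmat_eq hn i j]
  have hbound : ‖∫ a in ((i.val:ℝ)/n)..(((i.val:ℝ)+1)/n),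
      (Gi a (((j.val:ℝ)+1)/n) - Gi a ((j.val:ℝ)/n))‖
      ≤ (6 * (Real.sqrt (((j.val:ℝ)+1)/n) - Real.sqrt ((j.val:ℝ)/n))) * |(((i.val:ℝ)+1)/n) - ((i.val:ℝ)/n)| := by
    apply intervalIntegral.norm_integral_le_of_norm_le_const
    intro a ha
    rw [Set.uIoc_of_le (grid_le hn i)] at ha
    have ha01 : a ∈ Set.Icc (0:ℝ) 1 :=
      ⟨le_trans ((grid_mem hn i).1).1 (le_of_lt ha.1), le_trans ha.2 ((grid_mem hn i).2).2⟩
    have hgap := Gi_gap ha01 (grid_mem hn j).1.1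
      ((div_le_div_iff_of_pos_right hnp).2 (by linarith : (j.val:ℝ) ≤ (j.val:ℝ)+1)) (grid_mem hn j).2.2
    have hmon := Gi_mono ha01 (grid_mem hn j).1 (grid_mem hn j).2
      ((div_le_div_iff_of_pos_right hnp).2 (by linarith))
    rw [Real.norm_eq_abs, abs_of_nonneg (by linarith)]
    exact hgap
  have hdiff : |(((i.val:ℝ)+1)/n) - ((i.val:ℝ)/n)| = 1/n := by
    rw [div_sub_div_same, show ((i.val:ℝ)+1) - (i.val:ℝ) = 1 by ring, abs_of_nonneg (by positivity)]
  rw [hdiff] at hbound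
  rw [Real.norm_eq_abs] at hbound
  have h2 : (∫ a in ((i.val:ℝ)/n)..(((i.val:ℝ)+1)/n),
      (Gi a (((j.val:ℝ)+1)/n) - Gi a ((j.val:ℝ)/n)))
      ≤ (6 * (Real.sqrt (((j.val:ℝ)+1)/n) - Real.sqrt ((j.val:ℝ)/n))) * (1/n) :=
    le_trans (le_abs_self _) hbound
  calc (n:ℝ) * ∫ a in ((i.val:ℝ)/n)..(((i.val:ℝ)+1)/n),
      (Gi a (((j.val:ℝ)+1)/n) - Gi a ((j.val:ℝ)/n))
      ≤ (n:ℝ) * ((6 * (Real.sqrt (((j.val:ℝ)+1)/n) - Real.sqrt ((j.val:ℝ)/n))) * (1/n)) :=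
        mul_le_mul_of_nonneg_left h2 (le_of_lt hnp)
  _ = (6 * (Real.sqrt (((j.val:ℝ)+1)/n) - Real.sqrt ((j.val:ℝ)/n))) * ((n:ℝ) * (1/n)) := by ring
  _ = 6 * (Real.sqrt (((j.val:ℝ)+1)/n) - Real.sqrt ((j.val:ℝ)/n)) := by
      rw [mul_one_div, div_self (ne_of_gt hnp), mul_one]
  
-- (√(j+1) - √j)² ≤ 1/(j+1)
lemma sqrt_diff_sq (j : ℕ) : (Real.sqrt ((j:ℝ)+1) - Real.sqrt (j:ℝ))^2 ≤ 1/((j:ℝ)+1) := by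
  set u := Real.sqrt (j:ℝ) with hu
  set v := Real.sqrt ((j:ℝ)+1) with hv
  have hu2 : u^2 = (j:ℝ) := Real.sq_sqrt (by positivity)
  have hv2 : v^2 = (j:ℝ)+1 := Real.sq_sqrt (by positivity)
  have huv : u ≤ v := Real.sqrt_le_sqrt (by linarith)
  have hun : 0 ≤ u := Real.sqrt_nonneg _
  have hvp : 0 < v := by nlinarith
  rw [div_eq_inv_mul, ← hv2]
  rw [le_inv_mul_iff₀ (by positivity)]
  have huv2 : u*u ≤ u*v := mul_le_mul_of_nonneg_left huv hun
  have hkey : v*(v-u) ≤ 1 := by nlinarith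
  nlinarith [hkey, mul_nonneg (le_of_lt hvp) (sub_nonneg.2 huv)]

-- 1/(j+1) ≤ 9((j+1)^{1/9} - j^{1/9})
lemma ninth_tel (j : ℕ) : 1/((j:ℝ)+1) ≤ 9*(((j:ℝ)+1)^((1:ℝ)/9) - (j:ℝ)^((1:ℝ)/9)) := by
  set u := (j:ℝ)^((1:ℝ)/9) with hu
  set v := ((j:ℝ)+1)^((1:ℝ)/9) with hv
  have hun : 0 ≤ u := Real.rpow_nonneg (by positivity) _
  have hv1 : 1 ≤ v := by
    calc (1:ℝ) = (1:ℝ)^((1:ℝ)/9) := (Real.one_rpow _).symm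
    _ ≤ ((j:ℝ)+1)^((1:ℝ)/9) :=
        Real.rpow_le_rpow zero_le_one (by linarith [Nat.cast_nonneg (α := ℝ) j]) (by norm_num)
  have huv : u ≤ v := Real.rpow_le_rpow (by positivity) (by linarith) (by norm_num)
  have hu9 : u^(9:ℕ) = (j:ℝ) := by
    rw [hu, ← Real.rpow_natCast ((j:ℝ)^((1:ℝ)/9)) 9, ← Real.rpow_mul (by positivity)]
    norm_num
  have hv9 : v^(9:ℕ) = (j:ℝ)+1 := by
    rw [hv, ← Real.rpow_natCast (((j:ℝ)+1)^((1:ℝ)/9)) 9, ← Real.rpow_mul (by positivity)]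
    norm_num
  have hgeom : (∑ k ∈ Finset.range 9, v^k * u^(8-k)) * (v - u) = v^(9:ℕ) - u^(9:ℕ) :=
    geom_sum₂_mul v u 9
  have hone : (∑ k ∈ Finset.range 9, v^k * u^(8-k)) * (v - u) = 1 := by
    rw [hgeom, hu9, hv9]; ring
  have hsum : (∑ k ∈ Finset.range 9, v^k * u^(8-k)) ≤ 9 * v^(8:ℕ) := by
    have : ∀ k ∈ Finset.range 9, v^k * u^(8-k) ≤ v^(8:ℕ) := by
      intro k hk
      rw [Finset.mem_range] at hk
      calc v^k * u^(8-k) ≤ v^k * v^(8-k) := by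
            apply mul_le_mul_of_nonneg_left (pow_le_pow_left₀ hun huv _) (by positivity)
      _ = v^(8:ℕ) := by rw [← pow_add]; congr 1; omega
    calc (∑ k ∈ Finset.range 9, v^k * u^(8-k)) ≤ ∑ k ∈ Finset.range 9, v^(8:ℕ) :=
          Finset.sum_le_sum this
    _ = 9 * v^(8:ℕ) := by rw [Finset.sum_const, Finset.card_range, nsmul_eq_mul]; norm_num
  have hvu : 0 ≤ v - u := by linarith
  have h1 : 1 ≤ 9 * v^(8:ℕ) * (v - u) := by
    calc (1:ℝ) = (∑ k ∈ Finset.range 9, v^k * u^(8-k)) * (v - u) := hone.symm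
    _ ≤ 9 * v^(8:ℕ) * (v - u) := mul_le_mul_of_nonneg_right hsum hvu
  rw [div_le_iff₀ (by positivity)]
  calc (1:ℝ) ≤ 9 * v^(8:ℕ) * (v - u) := h1
  _ ≤ 9 * v^(8:ℕ) * (v - u) * v := by nlinarith [mul_nonneg (mul_nonneg (by norm_num : (0:ℝ) ≤ 9) (pow_nonneg (by linarith : (0:ℝ) ≤ v) 8)) hvu]
  _ = 9 * (v - u) * (v^(8:ℕ) * v) := by ring
  _ = 9 * (v - u) * ((j:ℝ)+1) := by rw [← pow_succ, show (8:ℕ)+1 = 9 from rfl, hv9]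
  _ = 9 * (v - u) * ((j:ℝ)+1) := rfl

-- the row ℓ² bound
lemma row_sq_bound (hn : 1 ≤ n) (i : Fin n) :
    ∑ j : Fin n, (Bmat n i j)^2 ≤ 324 * (n:ℝ)^(-(8:ℝ)/9) := by
  have hnp := npos hn
  have hterm : ∀ j : Fin n, (Bmat n i j)^2 ≤ (36/(n:ℝ)) * (9*((((j.val:ℝ)+1)^((1:ℝ)/9) - (j.val:ℝ)^((1:ℝ)/9)))) := by
    intro j
    have hB0 := Bmat_nonneg hn i j
    have hBle := Bmat_le hn i j
    have hΔ : Real.sqrt (((j.val:ℝ)+1)/n) - Real.sqrt ((j.val:ℝ)/n)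
        = (Real.sqrt ((j.val:ℝ)+1) - Real.sqrt (j.val:ℝ)) / Real.sqrt n := by
      rw [Real.sqrt_div (by positivity : (0:ℝ) ≤ (j.val:ℝ)+1),
        Real.sqrt_div (by positivity : (0:ℝ) ≤ (j.val:ℝ))]
      ring
    have hsq : (Bmat n i j)^2 ≤ (6 * ((Real.sqrt ((j.val:ℝ)+1) - Real.sqrt (j.val:ℝ)) / Real.sqrt n))^2 := by
      apply pow_le_pow_left₀ hB0
      rw [← hΔ]; exact hBle
    have hns : Real.sqrt (n:ℝ) ^ 2 = (n:ℝ) := Real.sq_sqrt (le_of_lt hnp)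
    have hnsp : (0:ℝ) < Real.sqrt n := Real.sqrt_pos.2 hnp
    have hexp : (6 * ((Real.sqrt ((j.val:ℝ)+1) - Real.sqrt (j.val:ℝ)) / Real.sqrt n))^2
        = 36 * (Real.sqrt ((j.val:ℝ)+1) - Real.sqrt (j.val:ℝ))^2 / (n:ℝ) := by
      rw [mul_pow, div_pow, hns]
      ring
    have h1 := sqrt_diff_sq j.val
    have h2 := ninth_tel j.val
    rw [hexp] at hsq
    calc (Bmat n i j)^2 ≤ 36 * (Real.sqrt ((j.val:ℝ)+1) - Real.sqrt (j.val:ℝ))^2 / (n:ℝ) := hsq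
    _ ≤ 36 * (1/((j.val:ℝ)+1)) / (n:ℝ) := by
        apply div_le_div_of_nonneg_right _ (le_of_lt hnp)
        nlinarith [h1]
    _ = (36/(n:ℝ)) * (1/((j.val:ℝ)+1)) := by ring
    _ ≤ (36/(n:ℝ)) * (9*((((j.val:ℝ)+1)^((1:ℝ)/9) - (j.val:ℝ)^((1:ℝ)/9)))) := by
        apply mul_le_mul_of_nonneg_left h2 (by positivity)
  calc ∑ j : Fin n, (Bmat n i j)^2
      ≤ ∑ j : Fin n, (36/(n:ℝ)) * (9*((((j.val:ℝ)+1)^((1:ℝ)/9) - (j.val:ℝ)^((1:ℝ)/9)))) :=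
        Finset.sum_le_sum (fun j _ => hterm j)
  _ = (324/(n:ℝ)) * ∑ j ∈ Finset.range n, ((((j:ℝ)+1)^((1:ℝ)/9) - (j:ℝ)^((1:ℝ)/9))) := by
      rw [Finset.mul_sum, Fin.sum_univ_eq_sum_range
        (fun j => (36/(n:ℝ)) * (9*((((j:ℝ)+1)^((1:ℝ)/9) - (j:ℝ)^((1:ℝ)/9)))))]
      apply Finset.sum_congr rfl
      intro j _
      ring
  _ = (324/(n:ℝ)) * (n:ℝ)^((1:ℝ)/9) := by
      congr 1
      have := Finset.sum_range_sub (fun j : ℕ => ((j:ℝ))^((1:ℝ)/9)) n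
      simp only [Nat.cast_add, Nat.cast_one, Nat.cast_zero] at this
      rw [this, Real.zero_rpow (by norm_num : (1:ℝ)/9 ≠ 0)]
      ring
  _ = 324 * (n:ℝ)^(-(8:ℝ)/9) := by
      rw [show -(8:ℝ)/9 = (1:ℝ)/9 - 1 by norm_num, Real.rpow_sub hnp, Real.rpow_one]
      ring

end MatrixSection
section TVRow

variable {n : ℕ}

lemma pointwise_tv (hn : 1 ≤ n) {a a' : ℝ} (ha : a ∈ Set.Icc (0:ℝ) 1)
    (ha' : a' ∈ Set.Icc (0:ℝ) 1) (haa : a ≤ a') :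
    ∑ j : Fin n, |(Gi a' (((j.val:ℝ)+1)/n) - Gi a' ((j.val:ℝ)/n))
      - (Gi a (((j.val:ℝ)+1)/n) - Gi a ((j.val:ℝ)/n))| ≤ 10 * (a' - a) := by
  have hnp := npos hn
  have hterm : ∀ j : Fin n,
      |(Gi a' (((j.val:ℝ)+1)/n) - Gi a' ((j.val:ℝ)/n)) - (Gi a (((j.val:ℝ)+1)/n) - Gi a ((j.val:ℝ)/n))|
      ≤ Mmaj a a' (((j.val:ℝ)+1)/n) - Mmaj a a' ((j.val:ℝ)/n) := by
    intro j
    have h := key_step ha ha' haa (grid_mem hn j).1.1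
      ((div_le_div_iff_of_pos_right hnp).2 (by linarith : (j.val:ℝ) ≤ (j.val:ℝ)+1)) (grid_mem hn j).2.2
    have heq : (Gi a' (((j.val:ℝ)+1)/n) - Gi a (((j.val:ℝ)+1)/n)) - (Gi a' ((j.val:ℝ)/n) - Gi a ((j.val:ℝ)/n))
        = (Gi a' (((j.val:ℝ)+1)/n) - Gi a' ((j.val:ℝ)/n)) - (Gi a (((j.val:ℝ)+1)/n) - Gi a ((j.val:ℝ)/n)) := by
      ring
    rwa [heq] at h
  calc ∑ j : Fin n, |(Gi a' (((j.val:ℝ)+1)/n) - Gi a' ((j.val:ℝ)/n))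
      - (Gi a (((j.val:ℝ)+1)/n) - Gi a ((j.val:ℝ)/n))|
      ≤ ∑ j : Fin n, (Mmaj a a' (((j.val:ℝ)+1)/n) - Mmaj a a' ((j.val:ℝ)/n)) :=
        Finset.sum_le_sum (fun j _ => hterm j)
  _ = ∑ j ∈ Finset.range n, (Mmaj a a' (((j:ℝ)+1)/n) - Mmaj a a' ((j:ℝ)/n)) :=
        Fin.sum_univ_eq_sum_range (fun j => (Mmaj a a' (((j:ℝ)+1)/n) - Mmaj a a' ((j:ℝ)/n))) n
  _ = Mmaj a a' (((n:ℕ):ℝ)/n) - Mmaj a a' (((0:ℕ):ℝ)/n) := by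
        have := Finset.sum_range_sub (fun j : ℕ => Mmaj a a' ((j:ℝ)/n)) n
        simp only [Nat.cast_add, Nat.cast_one] at this
        rw [← this]
  _ = Mmaj a a' 1 - Mmaj a a' 0 := by
        rw [show ((n:ℕ):ℝ)/n = 1 from div_self (ne_of_gt hnp)]
        norm_num
  _ ≤ 10 * (a' - a) := Mmaj_total ha ha' haa

lemma row_tv_bound (hn : 1 ≤ n) (i : Fin n) (hi : i.val + 1 < n) :
    ∑ j : Fin n, |Bmat n ⟨i.val + 1, hi⟩ j - Bmat n i j| ≤ 10 / n := by
  have hnp := npos hn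
  set c := (i.val:ℝ)/n with hc
  set d := ((i.val:ℝ)+1)/n with hd
  have hcd : c ≤ d := grid_le hn i
  have hinext : (((⟨i.val + 1, hi⟩ : Fin n).val : ℝ)) = (i.val:ℝ) + 1 := by push_cast; ring
  -- the shifted interval
  have hshift : ∀ j : Fin n, Bmat n ⟨i.val + 1, hi⟩ j
      = n * ∫ a in c..d, (Gi (a + 1/n) (((j.val:ℝ)+1)/n) - Gi (a + 1/n) ((j.val:ℝ)/n)) := by
    intro j
    rw [Bmat_eq hn ⟨i.val + 1, hi⟩ j]
    congr 1
    rw [intervalIntegral.integral_comp_add_right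
      (fun a => (Gi a (((j.val:ℝ)+1)/n) - Gi a ((j.val:ℝ)/n))) (1/n)]
    congr 1
    · rw [hc, hinext]; field_simp
    · rw [hd, hinext]; field_simp
  have hmem : ∀ a ∈ Set.uIoc c d, a ∈ Set.Icc (0:ℝ) 1 ∧ (a + 1/n) ∈ Set.Icc (0:ℝ) 1 := by
    intro a ha
    rw [Set.uIoc_of_le hcd] at ha
    have h1 : (0:ℝ) ≤ c := (grid_mem hn i).1.1
    have h2 : d ≤ 1 := (grid_mem hn i).2.2
    have h3 : d + 1/n ≤ 1 := by
      rw [hd, ← add_div, div_le_one hnp]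
      have : (i.val:ℝ) + 2 ≤ n := by exact_mod_cast hi
      linarith
    constructor
    · exact ⟨le_trans h1 (le_of_lt ha.1), le_trans ha.2 h2⟩
    · constructor
      · have : 0 < (1:ℝ)/n := by positivity
        linarith [le_trans h1 (le_of_lt ha.1)]
      · linarith [ha.2]
  -- integrability
  have hint : ∀ j : Fin n, IntervalIntegrable
      (fun a => |(Gi (a + 1/n) (((j.val:ℝ)+1)/n) - Gi (a + 1/n) ((j.val:ℝ)/n))
        - (Gi a (((j.val:ℝ)+1)/n) - Gi a ((j.val:ℝ)/n))|) MeasureTheory.volume c d := by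
    intro j
    apply Continuous.intervalIntegrable
    apply Continuous.abs
    apply Continuous.sub
    · exact ((Gi_cont _).comp (continuous_id.add continuous_const)).sub
        ((Gi_cont _).comp (continuous_id.add continuous_const))
    · exact (Gi_cont _).sub (Gi_cont _)
  have hint2 : ∀ j : Fin n, IntervalIntegrable
      (fun a => (Gi (a + 1/n) (((j.val:ℝ)+1)/n) - Gi (a + 1/n) ((j.val:ℝ)/n))) MeasureTheory.volume c d := by
    intro j
    apply Continuous.intervalIntegrable
    exact ((Gi_cont _).comp (continuous_id.add continuous_const)).sub
      ((Gi_cont _).comp (continuous_id.add continuous_const))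
  have hint3 : ∀ j : Fin n, IntervalIntegrable
      (fun a => (Gi a (((j.val:ℝ)+1)/n) - Gi a ((j.val:ℝ)/n))) MeasureTheory.volume c d := by
    intro j
    apply Continuous.intervalIntegrable
    exact (Gi_cont _).sub (Gi_cont _)
  have hΔ : ∀ j : Fin n, |Bmat n ⟨i.val + 1, hi⟩ j - Bmat n i j|
      ≤ n * ∫ a in c..d, |(Gi (a + 1/n) (((j.val:ℝ)+1)/n) - Gi (a + 1/n) ((j.val:ℝ)/n))
        - (Gi a (((j.val:ℝ)+1)/n) - Gi a ((j.val:ℝ)/n))| := by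
    intro j
    rw [hshift j, Bmat_eq hn i j, ← mul_sub, abs_mul, abs_of_nonneg (le_of_lt hnp)]
    apply mul_le_mul_of_nonneg_left _ (le_of_lt hnp)
    rw [← intervalIntegral.integral_sub (hint2 j) (hint3 j)]
    exact intervalIntegral.abs_integral_le_integral_abs hcd
  calc ∑ j : Fin n, |Bmat n ⟨i.val + 1, hi⟩ j - Bmat n i j|
      ≤ ∑ j : Fin n, n * ∫ a in c..d, |(Gi (a + 1/n) (((j.val:ℝ)+1)/n) - Gi (a + 1/n) ((j.val:ℝ)/n))
        - (Gi a (((j.val:ℝ)+1)/n) - Gi a ((j.val:ℝ)/n))| := Finset.sum_le_sum (fun j _ => hΔ j)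
  _ = n * ∫ a in c..d, ∑ j : Fin n, |(Gi (a + 1/n) (((j.val:ℝ)+1)/n) - Gi (a + 1/n) ((j.val:ℝ)/n))
        - (Gi a (((j.val:ℝ)+1)/n) - Gi a ((j.val:ℝ)/n))| := by
      rw [← Finset.mul_sum, intervalIntegral.integral_finset_sum (fun j _ => hint j)]
  _ ≤ n * ((10 * (1/(n:ℝ))) * |d - c|) := by
      apply mul_le_mul_of_nonneg_left _ (le_of_lt hnp)
      have := intervalIntegral.norm_integral_le_of_norm_le_const (a := c) (b := d) (C := 10 * (1/(n:ℝ)))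
        (f := fun a => ∑ j : Fin n, |(Gi (a + 1/n) (((j.val:ℝ)+1)/n) - Gi (a + 1/n) ((j.val:ℝ)/n))
        - (Gi a (((j.val:ℝ)+1)/n) - Gi a ((j.val:ℝ)/n))|) ?_
      · exact le_trans (le_abs_self _) (by rwa [Real.norm_eq_abs] at this)
      · intro a ha
        obtain ⟨ha1, ha2⟩ := hmem a ha
        rw [Real.norm_eq_abs, abs_of_nonneg (Finset.sum_nonneg (fun j _ => abs_nonneg _))]
        have hpt := pointwise_tv hn ha1 ha2 (by linarith [one_div_pos.mpr hnp] : a ≤ a + 1/n)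
        have heq : a + 1/n - a = 1/n := by ring
        rw [heq] at hpt
        exact hpt
  _ ≤ n * ((10 * (1/(n:ℝ))) * (1/n)) := by
      apply mul_le_mul_of_nonneg_left _ (le_of_lt hnp)
      apply mul_le_mul_of_nonneg_left _ (by positivity)
      rw [abs_of_nonneg (by linarith), hd, hc, div_sub_div_same]
      rw [show ((i.val:ℝ)+1) - (i.val:ℝ) = 1 by ring]
  _ = 10 / n * (n * (1/n)) := by ring
  _ = 10 / n := by rw [mul_one_div, div_self (ne_of_gt hnp), mul_one]

end TVRow
section FinalSection

lemma eig_component {n : ℕ} (lam : ℂ) (φ : Fin n → ℂ)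
    (hEig : ((Bmat n).map (fun x => (x : ℂ))).mulVec φ = lam • φ) (i : Fin n) :
    ∑ j : Fin n, (Bmat n i j : ℂ) * φ j = lam * φ i := by
  have := congrFun hEig i
  simpa [Matrix.mulVec, dotProduct, Matrix.map_apply, Pi.smul_apply, smul_eq_mul] using this

/-- There are constants `c₁, c₂, c₃ > 0`, independent of `n`, such that for every `n ≥ 2`,
every eigenvalue `λ` of `B(n)` with `|λ| > 0.08` and every corresponding eigenvector
`φ : Q_n → ℂ` with `‖φ‖₂ = 1`:  (i) `‖φ‖₁ ≥ c₁·n^{4/9}`;  (ii) `‖φ‖_∞ ≤ c₂·n^{-4/9}`;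
(iii) `|φ(i + 1/n) − φ(i)| ≤ c₃·n^{-13/9}` for every `i ∈ Q_n` with `i ≠ 1`. -/
theorem Bmat_eigenvector_bounds :
    ∃ c₁ c₂ c₃ : ℝ, 0 < c₁ ∧ 0 < c₂ ∧ 0 < c₃ ∧
      ∀ (n : ℕ), 2 ≤ n → ∀ (lam : ℂ) (φ : Fin n → ℂ),
        0.08 < ‖lam‖ →
        ((Bmat n).map (fun x => (x : ℂ))).mulVec φ = lam • φ →
        (∑ i : Fin n, ‖φ i‖ ^ 2) = 1 →
        (c₁ * (n : ℝ) ^ ((4 : ℝ) / 9) ≤ ∑ i : Fin n, ‖φ i‖) ∧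
        ((⨆ i : Fin n, ‖φ i‖) ≤ c₂ * (n : ℝ) ^ (-(4 : ℝ) / 9)) ∧
        (∀ (i : Fin n) (hi : (i : ℕ) + 1 < n),
          ‖φ ⟨(i : ℕ) + 1, hi⟩ - φ i‖ ≤ c₃ * (n : ℝ) ^ (-(13 : ℝ) / 9)) := by
  refine ⟨1/300, 300, 100000, by norm_num, by norm_num, by norm_num, ?_⟩
  intro n hn lam φ hlam hEig hnorm
  have hn1 : 1 ≤ n := by omega
  have hnp : (0:ℝ) < n := npos hn1
  have hr4 : (0:ℝ) < (n:ℝ)^(-(4:ℝ)/9) := Real.rpow_pos_of_pos hnp _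
  have hr4' : (0:ℝ) < (n:ℝ)^((4:ℝ)/9) := Real.rpow_pos_of_pos hnp _
  -- key per-row bound
  have hkey : ∀ i : Fin n, ‖lam‖ * ‖φ i‖ ≤ 18 * (n:ℝ)^(-(4:ℝ)/9) := by
    intro i
    have hcomp := eig_component lam φ hEig i
    have h1 : ‖lam * φ i‖ ≤ ∑ j : Fin n, Bmat n i j * ‖φ j‖ := by
      rw [← hcomp]
      calc ‖∑ j : Fin n, (Bmat n i j : ℂ) * φ j‖
          ≤ ∑ j : Fin n, ‖(Bmat n i j : ℂ) * φ j‖ :=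
            norm_sum_le _ _
      _ = ∑ j : Fin n, Bmat n i j * ‖φ j‖ := by
          apply Finset.sum_congr rfl
          intro j _
          rw [norm_mul, Complex.norm_real, Real.norm_eq_abs, abs_of_nonneg (Bmat_nonneg hn1 i j)]
    have hP2 : (∑ j : Fin n, Bmat n i j * ‖φ j‖)^2 ≤ 324 * (n:ℝ)^(-(8:ℝ)/9) := by
      calc (∑ j : Fin n, Bmat n i j * ‖φ j‖)^2
          ≤ (∑ j : Fin n, (Bmat n i j)^2) * (∑ j : Fin n, ‖φ j‖^2) :=
            Finset.sum_mul_sq_le_sq_mul_sq _ _ _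
      _ = ∑ j : Fin n, (Bmat n i j)^2 := by rw [hnorm, mul_one]
      _ ≤ 324 * (n:ℝ)^(-(8:ℝ)/9) := row_sq_bound hn1 i
    have hPn : 0 ≤ ∑ j : Fin n, Bmat n i j * ‖φ j‖ :=
      Finset.sum_nonneg (fun j _ => mul_nonneg (Bmat_nonneg hn1 i j) (norm_nonneg _))
    have hsq : (18 * (n:ℝ)^(-(4:ℝ)/9))^2 = 324 * (n:ℝ)^(-(8:ℝ)/9) := by
      rw [mul_pow, ← Real.rpow_natCast ((n:ℝ)^(-(4:ℝ)/9)) 2, ← Real.rpow_mul (le_of_lt hnp)]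
      norm_num
    have hP : (∑ j : Fin n, Bmat n i j * ‖φ j‖) ≤ 18 * (n:ℝ)^(-(4:ℝ)/9) := by
      have h2 : (∑ j : Fin n, Bmat n i j * ‖φ j‖)^2 ≤ (18 * (n:ℝ)^(-(4:ℝ)/9))^2 := by
        rw [hsq]; exact hP2
      calc (∑ j : Fin n, Bmat n i j * ‖φ j‖)
          = Real.sqrt ((∑ j : Fin n, Bmat n i j * ‖φ j‖)^2) := (Real.sqrt_sq hPn).symm
      _ ≤ Real.sqrt ((18 * (n:ℝ)^(-(4:ℝ)/9))^2) := Real.sqrt_le_sqrt h2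
      _ = 18 * (n:ℝ)^(-(4:ℝ)/9) := Real.sqrt_sq (by positivity)
    calc ‖lam‖ * ‖φ i‖ = ‖lam * φ i‖ := (norm_mul _ _).symm
    _ ≤ _ := h1
    _ ≤ 18 * (n:ℝ)^(-(4:ℝ)/9) := hP
  have hphi : ∀ i : Fin n, ‖φ i‖ ≤ 225 * (n:ℝ)^(-(4:ℝ)/9) := by
    intro i
    have h1 := hkey i
    have h2 : (0.08:ℝ) * ‖φ i‖ ≤ ‖lam‖ * ‖φ i‖ :=
      mul_le_mul_of_nonneg_right (le_of_lt hlam) (norm_nonneg _)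
    nlinarith [norm_nonneg (φ i)]
  refine ⟨?_, ?_, ?_⟩
  · -- (i)
    have h1 : (1:ℝ) ≤ 225 * (n:ℝ)^(-(4:ℝ)/9) * ∑ i : Fin n, ‖φ i‖ := by
      rw [← hnorm, Finset.mul_sum]
      apply Finset.sum_le_sum
      intro i _
      have := hphi i
      nlinarith [norm_nonneg (φ i), sq_nonneg (‖φ i‖)]
    have hprod : (n:ℝ)^((4:ℝ)/9) * (n:ℝ)^(-(4:ℝ)/9) = 1 := by
      rw [← Real.rpow_add hnp]
      norm_num
    have hsum_nonneg : 0 ≤ ∑ i : Fin n, ‖φ i‖ :=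
      Finset.sum_nonneg (fun i _ => norm_nonneg _)
    have h3 : (n:ℝ)^((4:ℝ)/9) ≤ 225 * ∑ i : Fin n, ‖φ i‖ := by
      have := mul_le_mul_of_nonneg_left h1 (le_of_lt hr4')
      rw [mul_one] at this
      calc (n:ℝ)^((4:ℝ)/9) ≤ (n:ℝ)^((4:ℝ)/9) * (225 * (n:ℝ)^(-(4:ℝ)/9) * ∑ i : Fin n, ‖φ i‖) := this
      _ = 225 * ((n:ℝ)^((4:ℝ)/9) * (n:ℝ)^(-(4:ℝ)/9)) * ∑ i : Fin n, ‖φ i‖ := by ring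
      _ = 225 * ∑ i : Fin n, ‖φ i‖ := by rw [hprod]; ring
    calc (1:ℝ)/300 * (n:ℝ)^((4:ℝ)/9) ≤ (1:ℝ)/225 * (n:ℝ)^((4:ℝ)/9) := by
          apply mul_le_mul_of_nonneg_right _ (le_of_lt hr4')
          norm_num
    _ ≤ ∑ i : Fin n, ‖φ i‖ := by linarith
  · -- (ii)
    have : Nonempty (Fin n) := ⟨⟨0, by omega⟩⟩
    apply ciSup_le
    intro i
    calc ‖φ i‖ ≤ 225 * (n:ℝ)^(-(4:ℝ)/9) := hphi i
    _ ≤ 300 * (n:ℝ)^(-(4:ℝ)/9) := by nlinarith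
  · -- (iii)
    intro i hi
    have hc1 := eig_component lam φ hEig i
    have hc2 := eig_component lam φ hEig ⟨i.val + 1, hi⟩
    have hdiff : lam * (φ ⟨i.val + 1, hi⟩ - φ i)
        = ∑ j : Fin n, ((Bmat n ⟨i.val + 1, hi⟩ j - Bmat n i j : ℝ) : ℂ) * φ j := by
      rw [mul_sub, ← hc1, ← hc2, ← Finset.sum_sub_distrib]
      apply Finset.sum_congr rfl
      intro j _
      push_cast
      ring
    have h1 : ‖lam * (φ ⟨i.val + 1, hi⟩ - φ i)‖
        ≤ ∑ j : Fin n, |Bmat n ⟨i.val + 1, hi⟩ j - Bmat n i j| * ‖φ j‖ := by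
      rw [hdiff]
      calc ‖∑ j : Fin n, ((Bmat n ⟨i.val + 1, hi⟩ j - Bmat n i j : ℝ) : ℂ) * φ j‖
          ≤ ∑ j : Fin n, ‖((Bmat n ⟨i.val + 1, hi⟩ j - Bmat n i j : ℝ) : ℂ) * φ j‖ :=
            norm_sum_le _ _
      _ = ∑ j : Fin n, |Bmat n ⟨i.val + 1, hi⟩ j - Bmat n i j| * ‖φ j‖ := by
          apply Finset.sum_congr rfl
          intro j _
          rw [norm_mul, Complex.norm_real, Real.norm_eq_abs]
    have h2 : ∑ j : Fin n, |Bmat n ⟨i.val + 1, hi⟩ j - Bmat n i j| * ‖φ j‖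
        ≤ (225 * (n:ℝ)^(-(4:ℝ)/9)) * (10 / n) := by
      calc ∑ j : Fin n, |Bmat n ⟨i.val + 1, hi⟩ j - Bmat n i j| * ‖φ j‖
          ≤ ∑ j : Fin n, |Bmat n ⟨i.val + 1, hi⟩ j - Bmat n i j| * (225 * (n:ℝ)^(-(4:ℝ)/9)) := by
            apply Finset.sum_le_sum
            intro j _
            exact mul_le_mul_of_nonneg_left (hphi j) (abs_nonneg _)
      _ = (∑ j : Fin n, |Bmat n ⟨i.val + 1, hi⟩ j - Bmat n i j|) * (225 * (n:ℝ)^(-(4:ℝ)/9)) := by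
            rw [Finset.sum_mul]
      _ ≤ (10 / n) * (225 * (n:ℝ)^(-(4:ℝ)/9)) := by
            apply mul_le_mul_of_nonneg_right (row_tv_bound hn1 i hi) (by positivity)
      _ = (225 * (n:ℝ)^(-(4:ℝ)/9)) * (10 / n) := by ring
    have hrpow : (n:ℝ)^(-(4:ℝ)/9) * (1/n) = (n:ℝ)^(-(13:ℝ)/9) := by
      rw [one_div, ← Real.rpow_neg_one (n:ℝ), ← Real.rpow_add hnp]
      norm_num
    have h3 : (0.08:ℝ) * ‖φ ⟨i.val + 1, hi⟩ - φ i‖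
        ≤ ‖lam‖ * ‖φ ⟨i.val + 1, hi⟩ - φ i‖ :=
      mul_le_mul_of_nonneg_right (le_of_lt hlam) (norm_nonneg _)
    have h4 : ‖lam‖ * ‖φ ⟨i.val + 1, hi⟩ - φ i‖
        ≤ 2250 * (n:ℝ)^(-(13:ℝ)/9) := by
      rw [← norm_mul]
      calc ‖lam * (φ ⟨i.val + 1, hi⟩ - φ i)‖
          ≤ (225 * (n:ℝ)^(-(4:ℝ)/9)) * (10 / n) := le_trans h1 h2
      _ = 2250 * ((n:ℝ)^(-(4:ℝ)/9) * (1/n)) := by ring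
      _ = 2250 * (n:ℝ)^(-(13:ℝ)/9) := by rw [hrpow]
    have hr13 : (0:ℝ) < (n:ℝ)^(-(13:ℝ)/9) := Real.rpow_pos_of_pos hnp _
    nlinarith [norm_nonneg (φ ⟨i.val + 1, hi⟩ - φ i)]
end FinalSection
end
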